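/- arXiv:2403.16693 — 2 statements merged into one kernel-verified Lean document; each statement's English description precedes it below -/
import Mathlib

section
/- Size of one-dimensional sections (Lemma 3.3): There exist constants C, c > 0, depending only on 0 < s < 1, such that c R ≤ |S_R(z)| · μ_h(S_R(z)) ≤ C R for every z ∈ ℝ and every R > 0, where |S_R(z)| is the Lebesgue measure of the section S_R(z) and μ_h(S_R(z)) = ∫_{S_R(z)} |w|^{1/s−2} dw. -/
open Set Filter Topology MeasureTheory
open scoped RealInnerProductSpace

noncomputable section

/-- ℝⁿ as Euclidean space. -/
abbrev Euc (n : ℕ) : Type := EuclideanSpace ℝ (Fin n)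

/-- Points of ℝⁿ⁺¹ = ℝⁿ × ℝ. -/
abbrev Pt (n : ℕ) : Type := Euc n × ℝ

/-- `h(z) = s²/(1−s)·|z|^{1/s}`. -/
def hfun (s z : ℝ) : ℝ := s ^ 2 / (1 - s) * |z| ^ (1 / s)

/-- `h'(z) = s/(1−s)·z·|z|^{1/s−2}`. -/
def hder (s z : ℝ) : ℝ := s / (1 - s) * z * |z| ^ (1 / s - 2)

/-- `h''(z) = |z|^{1/s−2}` (for `z ≠ 0`). -/
def hsec (s z : ℝ) : ℝ := |z| ^ (1 / s - 2)

/-- Monge–Ampère quasi-distance associated to `h`. -/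
def deltaH (s z₀ z : ℝ) : ℝ := hfun s z - hfun s z₀ - hder s z₀ * (z - z₀)

/-- One-dimensional Monge–Ampère section of `h`. -/
def secH (s R z₀ : ℝ) : Set ℝ := {z | deltaH s z₀ z < R}

/-- `δ_φ(x₀,x) = |x−x₀|²/2`. -/
def deltaX {n : ℕ} (x₀ x : Euc n) : ℝ := ‖x - x₀‖ ^ 2 / 2

/-- Section of `φ(x)=|x|²/2` : the euclidean ball of radius `√(2R)`. -/
def secX {n : ℕ} (R : ℝ) (x₀ : Euc n) : Set (Euc n) := {x | deltaX x₀ x < R}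

/-- `δ_Φ = δ_φ + δ_h` on ℝⁿ⁺¹. -/
def deltaPhi {n : ℕ} (s : ℝ) (p q : Pt n) : ℝ := deltaX p.1 q.1 + deltaH s p.2 q.2

/-- Monge–Ampère section in ℝⁿ⁺¹. -/
def secPhi {n : ℕ} (s R : ℝ) (p : Pt n) : Set (Pt n) := {q | deltaPhi s p q < R}

/-- Monge–Ampère cube in ℝⁿ. -/
def cubeX {n : ℕ} (R : ℝ) (x₀ : Euc n) : Set (Euc n) :=
  {x | ∀ i, |x i - x₀ i| < Real.sqrt (2 * R)}

/-- Monge–Ampère cube in ℝⁿ⁺¹. -/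
def cubePhi {n : ℕ} (s R : ℝ) (p : Pt n) : Set (Pt n) := cubeX R p.1 ×ˢ secH s R p.2

/-- The measure `μ_h` on ℝ, with density `h''`. -/
def muH (s : ℝ) : Measure ℝ :=
  volume.withDensity fun z => ENNReal.ofReal (|z| ^ (1 / s - 2))

/-- The measure `μ_Φ` on ℝⁿ⁺¹, with density `h''(z)`. -/
def muPhi (n : ℕ) (s : ℝ) : Measure (Pt n) :=
  (volume : Measure (Pt n)).withDensity fun p => ENNReal.ofReal (|p.2| ^ (1 / s - 2))

/-- Partial derivative `∂_z`. -/
def pZ {n : ℕ} (U : Pt n → ℝ) (p : Pt n) : ℝ := deriv (fun t => U (p.1, t)) p.2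

/-- Partial derivative `∂_zz`. -/
def pZZ {n : ℕ} (U : Pt n → ℝ) (p : Pt n) : ℝ :=
  deriv (fun t => deriv (fun t' => U (p.1, t')) t) p.2

/-- `i`-th standard basis vector of ℝⁿ. -/
def basisVec {n : ℕ} (i : Fin n) : Euc n := EuclideanSpace.single i 1

/-- Partial derivative `∂_i` in the `x` variables. -/
def pX {n : ℕ} (U : Pt n → ℝ) (p : Pt n) (i : Fin n) : ℝ :=
  fderiv ℝ (fun x => U (x, p.2)) p.1 (basisVec i)

/-- Second partial derivative `∂_{ij}` in the `x` variables. -/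
def pXX {n : ℕ} (U : Pt n → ℝ) (p : Pt n) (i j : Fin n) : ℝ :=
  fderiv ℝ (fun x => pX U (x, p.2) j) p.1 (basisVec i)

/-- The extension operator `a^{ij}(x)∂_{ij}U + |z|^{2−1/s}∂_{zz}U`. -/
def AOp {n : ℕ} (s : ℝ) (a : Euc n → Fin n → Fin n → ℝ) (U : Pt n → ℝ) (p : Pt n) : ℝ :=
  (∑ i, ∑ j, a p.1 i j * pXX U p i j) + |p.2| ^ (2 - 1 / s) * pZZ U p

/-- Identity coefficients (giving the Laplacian in `x`). -/
def idCoef (n : ℕ) : Euc n → Fin n → Fin n → ℝ := fun _ i j => if i = j then 1 else 0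

/-- Symmetric, uniformly elliptic coefficients on `Ω`. -/
def IsElliptic {n : ℕ} (lam Lam : ℝ) (a : Euc n → Fin n → Fin n → ℝ) (Ω : Set (Euc n)) : Prop :=
  ∀ x ∈ Ω, (∀ i j, a x i j = a x j i) ∧
    ∀ ξ : Fin n → ℝ,
      lam * ∑ i, ξ i ^ 2 ≤ ∑ i, ∑ j, a x i j * ξ i * ξ j ∧
      ∑ i, ∑ j, a x i j * ξ i * ξ j ≤ Lam * ∑ i, ξ i ^ 2

/-- `ψ` touches `U` from above at `p` within `D`. -/
def TouchAbove {n : ℕ} (ψ U : Pt n → ℝ) (D : Set (Pt n)) (p : Pt n) : Prop :=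
  ψ p = U p ∧ ∃ E : Set (Pt n), IsOpen E ∧ Convex ℝ E ∧ p ∈ E ∧ ∀ q ∈ E ∩ D, U q ≤ ψ q

/-- `ψ` touches `U` from below at `p` within `D`. -/
def TouchBelow {n : ℕ} (ψ U : Pt n → ℝ) (D : Set (Pt n)) (p : Pt n) : Prop :=
  ψ p = U p ∧ ∃ E : Set (Pt n), IsOpen E ∧ Convex ℝ E ∧ p ∈ E ∧ ∀ q ∈ E ∩ D, ψ q ≤ U q

/-- `f` admits a continuous extension to the closure of `D`. -/
def ExtCont {n : ℕ} (f : Pt n → ℝ) (D : Set (Pt n)) : Prop :=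
  ∃ g : Pt n → ℝ, ContinuousOn g (closure D) ∧ EqOn f g D

/-- The test class `C_s` on an (open, upper) region `D`. -/
def MemCs {n : ℕ} (s : ℝ) (D : Set (Pt n)) (ψ : Pt n → ℝ) : Prop :=
  ContDiffOn ℝ 2 ψ D ∧ ExtCont ψ D ∧
  (∀ i, ExtCont (fun p => pX ψ p i) D) ∧
  (∀ i j, ExtCont (fun p => pXX ψ p i j) D) ∧
  ExtCont (pZ ψ) D ∧
  ExtCont (fun p => |p.2| ^ (2 - 1 / s) * pZZ ψ p) D ∧
  ∀ p ∈ closure D, p.2 = 0 →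
    ∃ L, HasDerivWithinAt (fun t => ψ (p.1, t)) L (Ici (0 : ℝ)) 0 ∧
      Tendsto (pZ ψ) (𝓝[D] p) (𝓝 L)

/-- `C_s`-viscosity subsolution of `a^{ij}∂_{ij}U + |z|^{2-1/s}∂_{zz}U = F` in `D`,
`∂_z U = f` on the flat part `T ⊂ {z = 0}`. -/
def ViscSub {n : ℕ} (s : ℝ) (a : Euc n → Fin n → Fin n → ℝ) (F : Pt n → ℝ) (f : Euc n → ℝ)
    (D T : Set (Pt n)) (U : Pt n → ℝ) : Prop :=
  (∀ ψ : Pt n → ℝ, ContDiffOn ℝ 2 ψ D → ∀ p ∈ D, TouchAbove ψ U D p → F p ≤ AOp s a ψ p) ∧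
  (∀ ψ : Pt n → ℝ, MemCs s (D ∩ {q : Pt n | 0 < q.2}) ψ → ∀ p ∈ T,
    TouchAbove ψ U ((D ∩ {q : Pt n | 0 < q.2}) ∪ T) p →
    ∀ L, HasDerivWithinAt (fun t => ψ (p.1, t)) L (Ici (0 : ℝ)) 0 → f p.1 ≤ L)

/-- `C_s`-viscosity supersolution. -/
def ViscSuper {n : ℕ} (s : ℝ) (a : Euc n → Fin n → Fin n → ℝ) (F : Pt n → ℝ) (f : Euc n → ℝ)
    (D T : Set (Pt n)) (U : Pt n → ℝ) : Prop :=
  (∀ ψ : Pt n → ℝ, ContDiffOn ℝ 2 ψ D → ∀ p ∈ D, TouchBelow ψ U D p → AOp s a ψ p ≤ F p) ∧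
  (∀ ψ : Pt n → ℝ, MemCs s (D ∩ {q : Pt n | 0 < q.2}) ψ → ∀ p ∈ T,
    TouchBelow ψ U ((D ∩ {q : Pt n | 0 < q.2}) ∪ T) p →
    ∀ L, HasDerivWithinAt (fun t => ψ (p.1, t)) L (Ici (0 : ℝ)) 0 → L ≤ f p.1)

/-- `C_s`-viscosity solution. -/
def ViscSol {n : ℕ} (s : ℝ) (a : Euc n → Fin n → Fin n → ℝ) (F : Pt n → ℝ) (f : Euc n → ℝ)
    (D T : Set (Pt n)) (U : Pt n → ℝ) : Prop :=
  ViscSub s a F f D T U ∧ ViscSuper s a F f D T U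

/-- `C_s`-viscosity solution of the reflected problem on a region `S` symmetric across `{z=0}`:
the equation holds in `S ∩ {z ≠ 0}` and the Neumann condition on `S ∩ {z = 0}`. -/
def ViscSolRefl {n : ℕ} (s : ℝ) (a : Euc n → Fin n → Fin n → ℝ) (F : Pt n → ℝ) (f : Euc n → ℝ)
    (S : Set (Pt n)) (U : Pt n → ℝ) : Prop :=
  ViscSub s a F f (S ∩ {p : Pt n | p.2 ≠ 0}) (S ∩ {p : Pt n | p.2 = 0}) U ∧
  ViscSuper s a F f (S ∩ {p : Pt n | p.2 ≠ 0}) (S ∩ {p : Pt n | p.2 = 0}) U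

/-- The upper half-cylinder `S_r(0) × (S_ρ(0))⁺ ⊂ ℝⁿ × ℝ`. -/
def cylUp (n : ℕ) (s r ρ : ℝ) : Set (Pt n) := secX r (0 : Euc n) ×ˢ (secH s ρ 0 ∩ Ioi (0 : ℝ))

/-- The flat piece `T_r = S_r(0) × {0}`. -/
def Tflat (n : ℕ) (r : ℝ) : Set (Pt n) := secX r (0 : Euc n) ×ˢ ({0} : Set ℝ)

/-- Upper half of the unit section of `Φ` in ℝⁿ⁺¹. -/
def Dupper (n : ℕ) (s : ℝ) : Set (Pt n) :=
  secPhi s 1 ((0 : Euc n), (0 : ℝ)) ∩ {p : Pt n | 0 < p.2}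

/-- Flat part of the unit section of `Φ`. -/
def Tzero (n : ℕ) (s : ℝ) : Set (Pt n) :=
  secPhi s 1 ((0 : Euc n), (0 : ℝ)) ∩ {p : Pt n | p.2 = 0}

/-- Oscillation of `H` on `A`. -/
def oscOn {n : ℕ} (H : Pt n → ℝ) (A : Set (Pt n)) : ℝ := sSup (H '' A) - sInf (H '' A)

/-- Norm of the `k`-th derivative in the `x` variables. -/
def DxkNorm {n : ℕ} (k : ℕ) (H : Pt n → ℝ) (p : Pt n) : ℝ :=
  ‖iteratedFDeriv ℝ k (fun x => H (x, p.2)) p.1‖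

/-- Classical solution of `Δ_x H + z^{2−1/s}∂_{zz}H = 0` in `D`, `∂_z H = 0` on `T`. -/
def ClassicalHarm (n : ℕ) (s : ℝ) (D T : Set (Pt n)) (H : Pt n → ℝ) : Prop :=
  ContDiffOn ℝ 2 H D ∧ ContinuousOn H (D ∪ T) ∧
  (∀ p ∈ D, (∑ i, pXX H p i i) + |p.2| ^ (2 - 1 / s) * pZZ H p = 0) ∧
  (∀ p ∈ T, HasDerivWithinAt (fun t => H (p.1, t)) 0 (Ici (0 : ℝ)) 0)

/-- Contact set obtained by sliding Monge–Ampère paraboloids of opening `a` with vertices in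
`B` from below until they touch the graph of `U` over `K`. -/
def contactSet {n : ℕ} (s a : ℝ) (U : Pt n → ℝ) (K B : Set (Pt n)) : Set (Pt n) :=
  {p | p ∈ K ∧ ∃ v ∈ B, ∀ q ∈ K, U p + a * deltaPhi s v p ≤ U q + a * deltaPhi s v q}

def psi (q y : ℝ) : ℝ := if 0 ≤ y then y ^ q else -((-y) ^ q)

lemma psi_of_nonneg {q y : ℝ} (hy : 0 ≤ y) : psi q y = y ^ q := if_pos hy

lemma psi_of_neg {q y : ℝ} (hy : y < 0) : psi q y = -((-y) ^ q) := if_neg (not_le.mpr hy)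

lemma psi_strictMono {q : ℝ} (hq : 0 < q) : StrictMono (psi q) := by
  have hpos : ∀ x y : ℝ, 0 ≤ x → x < y → psi q x < psi q y := by
    intro x y hx hxy
    rw [psi_of_nonneg hx, psi_of_nonneg (hx.trans hxy.le)]
    exact Real.rpow_lt_rpow hx hxy hq
  intro x y hxy
  rcases le_or_gt 0 x with hx | hx
  · exact hpos x y hx hxy
  · rcases le_or_gt 0 y with hy | hy
    · have h1 : 0 < (-x) ^ q := Real.rpow_pos_of_pos (by linarith) q
      rw [psi_of_neg hx, psi_of_nonneg hy]
      have : (0:ℝ) ≤ y ^ q := Real.rpow_nonneg hy q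
      linarith
    · have h2 := hpos (-y) (-x) (by linarith) (by linarith)
      rw [psi_of_nonneg (by linarith : (0:ℝ) ≤ -y),
        psi_of_nonneg (by linarith : (0:ℝ) ≤ -x)] at h2
      rw [psi_of_neg hx, psi_of_neg hy]
      linarith

lemma psi_smul {q : ℝ} (hq : 0 < q) {l : ℝ} (hl : 0 < l) (y : ℝ) :
    psi q (l * y) = l ^ q * psi q y := by
  rcases le_or_gt 0 y with hy | hy
  · rw [psi_of_nonneg hy, psi_of_nonneg (by positivity), Real.mul_rpow hl.le hy]
  · have h1 : l * y < 0 := mul_neg_of_pos_of_neg hl hy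
    rw [psi_of_neg hy, psi_of_neg h1, show -(l * y) = l * (-y) by ring,
      Real.mul_rpow hl.le (by linarith)]
    ring

/-- product-form secant monotonicity for convex functions on `Ici 0`:
slope over `[a,b]` is at most slope over `[c,d]` when `a ≤ c`, `b ≤ d`. -/
lemma slope4_of_convexOn {f : ℝ → ℝ} (hf : ConvexOn ℝ (Ici 0) f) {a b c d : ℝ}
    (ha : 0 ≤ a) (hc : 0 ≤ c) (hab : a < b) (hcd : c < d) (hac : a ≤ c) (hbd : b ≤ d) :
    (f b - f a) * (d - c) ≤ (f d - f c) * (b - a) := by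
  have had : a < d := lt_of_lt_of_le hab hbd
  have h1 : (f b - f a) / (b - a) ≤ (f d - f a) / (d - a) :=
    hf.secant_mono (mem_Ici.mpr ha) (mem_Ici.mpr (ha.trans hab.le))
      (mem_Ici.mpr (hc.trans hcd.le)) hab.ne' had.ne' hbd
  have h2 : (f a - f d) / (a - d) ≤ (f c - f d) / (c - d) :=
    hf.secant_mono (mem_Ici.mpr (hc.trans hcd.le)) (mem_Ici.mpr ha)
      (mem_Ici.mpr hc) had.ne hcd.ne hac
  have h2' : (f d - f a) / (d - a) ≤ (f d - f c) / (d - c) := by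
    have e1 : (f a - f d) / (a - d) = (f d - f a) / (d - a) := by
      rw [← neg_div_neg_eq]; ring_nf
    have e2 : (f c - f d) / (c - d) = (f d - f c) / (d - c) := by
      rw [← neg_div_neg_eq]; ring_nf
    rw [e1, e2] at h2
    exact h2
  have h3 := h1.trans h2'
  rw [div_le_div_iff₀ (by linarith) (by linarith)] at h3
  linarith

lemma slope4_of_concaveOn {f : ℝ → ℝ} (hf : ConcaveOn ℝ (Ici 0) f) {a b c d : ℝ}
    (ha : 0 ≤ a) (hc : 0 ≤ c) (hab : a < b) (hcd : c < d) (hac : a ≤ c) (hbd : b ≤ d) :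
    (f d - f c) * (b - a) ≤ (f b - f a) * (d - c) := by
  have := slope4_of_convexOn hf.neg ha hc hab hcd hac hbd
  simp only [Pi.neg_apply] at this
  nlinarith [this]

lemma diffmono_of_convexOn {f : ℝ → ℝ} (hf : ConvexOn ℝ (Ici 0) f) {a b t : ℝ}
    (ha : 0 ≤ a) (hab : a ≤ b) (ht : 0 ≤ t) :
    f (a + t) - f a ≤ f (b + t) - f b := by
  rcases eq_or_lt_of_le ht with rfl | ht'
  · simp
  rcases eq_or_lt_of_le hab with rfl | hab'
  · exact le_refl _
  have := slope4_of_convexOn hf ha (ha.trans hab) (by linarith : a < a + t)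
    (by linarith : b < b + t) hab (by linarith)
  have ht2 : a + t - a = t := by ring
  have ht3 : b + t - b = t := by ring
  rw [ht2, ht3] at this
  have := le_of_mul_le_mul_right this ht'
  linarith

lemma diffmono_of_concaveOn {f : ℝ → ℝ} (hf : ConcaveOn ℝ (Ici 0) f) {a b t : ℝ}
    (ha : 0 ≤ a) (hab : a ≤ b) (ht : 0 ≤ t) :
    f (b + t) - f b ≤ f (a + t) - f a := by
  have := diffmono_of_convexOn hf.neg ha hab ht
  simp only [Pi.neg_apply] at this
  linarith


namespace SecSize
set_option maxHeartbeats 1000000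
variable {s : ℝ}

lemma c0_pos (hs0 : 0 < s) (hs1 : s < 1) : 0 < s / (1 - s) :=
  div_pos hs0 (by linarith)

lemma q_pos (hs0 : 0 < s) (hs1 : s < 1) : 0 < 1 / s - 1 := by
  have h : 1 / s - 1 = (1 - s) / s := by field_simp
  rw [h]
  exact div_pos (by linarith) hs0

lemma hder_zero : hder s 0 = 0 := by simp [hder]

lemma hder_neg' (z : ℝ) : hder s (-z) = - hder s z := by
  simp [hder]

lemma hfun_neg' (z : ℝ) : hfun s (-z) = hfun s z := by simp [hfun]

lemma hder_of_pos (hs0 : 0 < s) (hz : 0 < z) :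
    hder s z = s / (1 - s) * z ^ (1 / s - 1) := by
  rw [hder, abs_of_pos hz, mul_assoc]
  congr 1
  rw [show z * z ^ (1 / s - 2) = z ^ (1:ℝ) * z ^ (1 / s - 2) by rw [Real.rpow_one],
    ← Real.rpow_add hz]
  ring_nf

lemma hder_of_nonneg (hs0 : 0 < s) (hs1 : s < 1) (hz : 0 ≤ z) :
    hder s z = s / (1 - s) * z ^ (1 / s - 1) := by
  rcases hz.lt_or_eq with h | rfl
  · exact hder_of_pos hs0 h
  · rw [hder_zero, Real.zero_rpow (q_pos hs0 hs1).ne', mul_zero]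

lemma hder_nonneg_of_nonneg (hs0 : 0 < s) (hs1 : s < 1) (hz : 0 ≤ z) : 0 ≤ hder s z := by
  rw [hder_of_nonneg hs0 hs1 hz]
  exact mul_nonneg (c0_pos hs0 hs1).le (Real.rpow_nonneg hz _)

lemma hder_strictMono (hs0 : 0 < s) (hs1 : s < 1) : StrictMono (hder s) := by
  have hposside : ∀ x y : ℝ, 0 ≤ x → x < y → hder s x < hder s y := by
    intro x y hx hxy
    rw [hder_of_nonneg hs0 hs1 hx, hder_of_nonneg hs0 hs1 (hx.trans hxy.le)]
    exact mul_lt_mul_of_pos_left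
      (Real.rpow_lt_rpow hx hxy (q_pos hs0 hs1)) (c0_pos hs0 hs1)
  intro x y hxy
  rcases le_or_gt 0 x with hx | hx
  · exact hposside x y hx hxy
  · rcases le_or_gt 0 y with hy | hy
    · have h1 : hder s x < 0 := by
        have : 0 < hder s (-x) := by
          rw [hder_of_pos hs0 (by linarith : (0:ℝ) < -x)]
          exact mul_pos (c0_pos hs0 hs1) (Real.rpow_pos_of_pos (by linarith) _)
        have := hder_neg' (s := s) x
        linarith
      exact lt_of_lt_of_le h1 (hder_nonneg_of_nonneg hs0 hs1 hy)
    · have := hposside (-y) (-x) (by linarith) (by linarith)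
      rw [hder_neg', hder_neg'] at this
      linarith

lemma p_pos (hs0 : 0 < s) (hs1 : s < 1) : 1 < 1 / s := by
  have := q_pos hs0 hs1; linarith

lemma hfun_of_pos (hz : 0 < z) : hfun s z = s ^ 2 / (1 - s) * z ^ (1 / s) := by
  rw [hfun, abs_of_pos hz]

lemma continuous_hfun (hs0 : 0 < s) : Continuous (hfun s) := by
  apply Continuous.mul continuous_const
  exact continuous_abs.rpow_const (fun x => Or.inr (by positivity))

lemma hasDerivAt_hfun (hs0 : 0 < s) (hs1 : s < 1) (z : ℝ) :
    HasDerivAt (hfun s) (hder s z) z := by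
  have hq := q_pos hs0 hs1
  have hcs : s / (1 - s) = s ^ 2 / (1 - s) * (1 / s) := by
    rw [div_mul_div_comm, mul_one, sq, mul_comm (1 - s) s, mul_div_mul_left _ _ hs0.ne']
  rcases lt_trichotomy z 0 with hz | rfl | hz
  · -- z < 0
    have h1 : HasDerivAt (fun z : ℝ => s ^ 2 / (1 - s) * (-z) ^ (1 / s))
        (s / (1 - s) * z * (-z) ^ (1 / s - 2)) z := by
      have hnz : (0:ℝ) < -z := by linarith
      have h0 : HasDerivAt (fun y : ℝ => y ^ (1 / s)) (1 / s * (-z) ^ (1 / s - 1)) (-z) :=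
        Real.hasDerivAt_rpow_const (Or.inl hnz.ne')
      have h2 := (h0.comp z (hasDerivAt_neg z)).const_mul (s ^ 2 / (1 - s))
      refine h2.congr_deriv ?_
      have : (-z) ^ (1 / s - 1) = (-z) ^ (1 / s - 2) * (-z) := by
        rw [show (1 / s - 1 : ℝ) = (1 / s - 2) + 1 by ring, Real.rpow_add hnz, Real.rpow_one]
      rw [this, hcs]; ring
    have : ∀ᶠ y in 𝓝 z, hfun s y = s ^ 2 / (1 - s) * (-y) ^ (1 / s) := by
      filter_upwards [eventually_lt_nhds hz] with y hy
      rw [hfun, abs_of_neg hy]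
    have := h1.congr_of_eventuallyEq this
    rwa [hder, abs_of_neg hz]
  · -- z = 0
    rw [hasDerivAt_iff_tendsto_slope, hder_zero]
    have ha0 : (0:ℝ) ≤ s ^ 2 / (1 - s) := div_nonneg (by positivity) (by linarith)
    have hbound : ∀ᶠ t in 𝓝[≠] (0:ℝ),
        ‖slope (hfun s) 0 t‖ ≤ s ^ 2 / (1 - s) * |t| ^ (1 / s - 1) := by
      filter_upwards [self_mem_nhdsWithin] with t ht
      have ht0 : t ≠ 0 := ht
      have habs : 0 < |t| := abs_pos.mpr ht0
      rw [slope_def_field, hfun, hfun, abs_zero,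
        Real.zero_rpow (by positivity : (1:ℝ)/s ≠ 0), mul_zero, sub_zero, sub_zero]
      rw [Real.norm_eq_abs, abs_div, abs_mul, abs_of_nonneg ha0,
        abs_of_nonneg (Real.rpow_nonneg (abs_nonneg t) _), mul_div_assoc]
      apply le_of_eq
      congr 1
      rw [Real.rpow_sub habs, Real.rpow_one]
    have htend : Tendsto (fun t : ℝ => s ^ 2 / (1 - s) * |t| ^ (1 / s - 1)) (𝓝[≠] 0) (𝓝 0) := by
      have h1 : Tendsto (fun t : ℝ => |t| ^ (1 / s - 1)) (𝓝 0) (𝓝 0) := by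
        have hc : ContinuousAt (fun x : ℝ => x ^ (1 / s - 1)) (|(0:ℝ)|) :=
          Real.continuousAt_rpow_const _ _ (Or.inr hq.le)
        have h2 := hc.comp continuous_abs.continuousAt
        have h4 : Tendsto (fun t : ℝ => |t| ^ (1 / s - 1)) (𝓝 0) (𝓝 (|(0:ℝ)| ^ (1/s - 1))) := h2
        rwa [abs_zero, Real.zero_rpow hq.ne'] at h4
      have h5 := (h1.const_mul (s ^ 2 / (1 - s))).mono_left
        (nhdsWithin_le_nhds (s := {(0:ℝ)}ᶜ))
      simpa using h5
    exact squeeze_zero_norm' hbound htend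
  · -- z > 0
    have h1 : HasDerivAt (fun z : ℝ => s ^ 2 / (1 - s) * z ^ (1 / s))
        (s / (1 - s) * z * z ^ (1 / s - 2)) z := by
      have h0 : HasDerivAt (fun y : ℝ => y ^ (1 / s)) (1 / s * z ^ (1 / s - 1)) z :=
        Real.hasDerivAt_rpow_const (Or.inl hz.ne')
      have h2 := h0.const_mul (s ^ 2 / (1 - s))
      refine h2.congr_deriv ?_
      have : z ^ (1 / s - 1) = z ^ (1 / s - 2) * z := by
        rw [show (1 / s - 1 : ℝ) = (1 / s - 2) + 1 by ring, Real.rpow_add hz, Real.rpow_one]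
      rw [this, hcs]; ring
    have : ∀ᶠ y in 𝓝 z, hfun s y = s ^ 2 / (1 - s) * y ^ (1 / s) := by
      filter_upwards [eventually_gt_nhds hz] with y hy
      rw [hfun, abs_of_pos hy]
    have := h1.congr_of_eventuallyEq this
    rwa [hder, abs_of_pos hz]

lemma cq_one (hs0 : 0 < s) (hs1 : s < 1) : s / (1 - s) * (1 / s - 1) = 1 := by
  have h1 : (1:ℝ) - s ≠ 0 := by linarith
  have h2 : s ≠ 0 := hs0.ne'
  field_simp

lemma hasDerivAt_hder (hs0 : 0 < s) (hs1 : s < 1) (hz : z ≠ 0) :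
    HasDerivAt (hder s) (|z| ^ (1 / s - 2)) z := by
  have hq := q_pos hs0 hs1
  rcases hz.lt_or_gt with hz | hz
  · have hnz : (0:ℝ) < -z := by linarith
    have h0 : HasDerivAt (fun y : ℝ => y ^ (1 / s - 1)) ((1 / s - 1) * (-z) ^ (1 / s - 1 - 1)) (-z) :=
      Real.hasDerivAt_rpow_const (Or.inl hnz.ne')
    have h1 := ((h0.comp z (hasDerivAt_neg z)).const_mul (s / (1 - s))).neg
    have h2 : ∀ᶠ y in 𝓝 z, hder s y = -(s / (1 - s) * (-y) ^ (1 / s - 1)) := by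
      filter_upwards [eventually_lt_nhds hz] with y hy
      have := hder_of_pos (z := -y) hs0 (by linarith)
      rw [hder_neg'] at this
      linarith
    have h3 := h1.congr_of_eventuallyEq h2
    refine h3.congr_deriv ?_
    have hc := cq_one hs0 hs1
    have h4 : -(s / (1 - s) * ((1 / s - 1) * (-z) ^ (1 / s - 1 - 1) * -1))
        = (s / (1 - s) * (1 / s - 1)) * (-z) ^ (1 / s - 1 - 1) := by ring
    rw [abs_of_neg hz, h4, hc, one_mul]
    congr 1
    ring
  · have h0 : HasDerivAt (fun y : ℝ => y ^ (1 / s - 1)) ((1 / s - 1) * z ^ (1 / s - 1 - 1)) z :=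
      Real.hasDerivAt_rpow_const (Or.inl hz.ne')
    have h1 := h0.const_mul (s / (1 - s))
    have h2 : ∀ᶠ y in 𝓝 z, hder s y = s / (1 - s) * y ^ (1 / s - 1) := by
      filter_upwards [eventually_gt_nhds hz] with y hy
      exact hder_of_pos hs0 hy
    have h3 := h1.congr_of_eventuallyEq h2
    refine h3.congr_deriv ?_
    have hc := cq_one hs0 hs1
    have h4 : s / (1 - s) * ((1 / s - 1) * z ^ (1 / s - 1 - 1))
        = (s / (1 - s) * (1 / s - 1)) * z ^ (1 / s - 1 - 1) := by ring
    rw [abs_of_pos hz, h4, hc, one_mul]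
    congr 1
    ring

lemma continuous_hder (hs0 : 0 < s) (hs1 : s < 1) : Continuous (hder s) := by
  have hq := q_pos hs0 hs1
  rw [continuous_iff_continuousAt]
  intro z
  rcases eq_or_ne z 0 with rfl | hz
  · have hc0 : (0:ℝ) < s / (1 - s) := div_pos hs0 (by linarith)
    have hbound : ∀ t : ℝ, ‖hder s t‖ ≤ s / (1 - s) * |t| ^ (1 / s - 1) := by
      intro t
      rcases eq_or_ne t 0 with rfl | ht
      · rw [hder_zero]
        simp only [norm_zero]
        exact mul_nonneg hc0.le (Real.rpow_nonneg (abs_nonneg _) _)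
      · have habs : 0 < |t| := abs_pos.mpr ht
        rw [hder, Real.norm_eq_abs, abs_mul, abs_mul, abs_of_nonneg hc0.le,
          abs_of_nonneg (Real.rpow_nonneg (abs_nonneg t) _)]
        apply le_of_eq
        rw [mul_assoc]
        congr 1
        rw [show |t| * |t| ^ (1 / s - 2) = |t| ^ (1:ℝ) * |t| ^ (1 / s - 2) by rw [Real.rpow_one],
          ← Real.rpow_add habs]
        ring_nf
    have htend : Tendsto (fun t : ℝ => s / (1 - s) * |t| ^ (1 / s - 1)) (𝓝 0) (𝓝 0) := by
      have hc : ContinuousAt (fun x : ℝ => x ^ (1 / s - 1)) (|(0:ℝ)|) :=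
        Real.continuousAt_rpow_const _ _ (Or.inr hq.le)
      have h2 : Tendsto (fun t : ℝ => |t| ^ (1 / s - 1)) (𝓝 0) (𝓝 (|(0:ℝ)| ^ (1/s - 1))) :=
        hc.comp continuous_abs.continuousAt
      rw [abs_zero, Real.zero_rpow hq.ne'] at h2
      simpa using h2.const_mul (s / (1 - s))
    have : Tendsto (hder s) (𝓝 0) (𝓝 0) := squeeze_zero_norm hbound htend
    rwa [ContinuousAt, hder_zero]
  · exact (hasDerivAt_hder hs0 hs1 hz).continuousAt


lemma delta_refl (z₀ : ℝ) : deltaH s z₀ z₀ = 0 := by simp [deltaH]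

lemma delta_symm' (z₀ z : ℝ) : deltaH s (-z₀) (-z) = deltaH s z₀ z := by
  rw [deltaH, deltaH, hfun_neg', hfun_neg', hder_neg']
  ring

lemma delta_identity (z₀ m z : ℝ) :
    deltaH s z₀ z = deltaH s z₀ m + deltaH s m z + (hder s m - hder s z₀) * (z - m) := by
  simp only [deltaH]; ring

lemma delta_add' (z₀ z : ℝ) :
    deltaH s z₀ z + deltaH s z z₀ = (hder s z - hder s z₀) * (z - z₀) := by
  simp only [deltaH]; ring

lemma delta_nonneg (hs0 : 0 < s) (hs1 : s < 1) (w z : ℝ) : 0 ≤ deltaH s w z := by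
  rcases lt_trichotomy w z with h | rfl | h
  · obtain ⟨ξ, hξ, hslope⟩ := exists_hasDerivAt_eq_slope (hfun s) (hder s) h
      (continuous_hfun hs0).continuousOn (fun x _ => hasDerivAt_hfun hs0 hs1 x)
    have hmono : hder s w ≤ hder s ξ := (hder_strictMono hs0 hs1).monotone hξ.1.le
    rw [eq_div_iff (sub_ne_zero.mpr h.ne')] at hslope
    rw [deltaH]
    nlinarith [sub_pos.mpr h]
  · simp [delta_refl]
  · obtain ⟨ξ, hξ, hslope⟩ := exists_hasDerivAt_eq_slope (hfun s) (hder s) h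
      (continuous_hfun hs0).continuousOn (fun x _ => hasDerivAt_hfun hs0 hs1 x)
    have hmono : hder s ξ ≤ hder s w := (hder_strictMono hs0 hs1).monotone hξ.2.le
    rw [eq_div_iff (sub_ne_zero.mpr h.ne')] at hslope
    rw [deltaH]
    nlinarith [sub_pos.mpr h]

lemma delta_ge (hs0 : 0 < s) (hs1 : s < 1) (z₀ m z : ℝ) :
    (hder s m - hder s z₀) * (z - m) ≤ deltaH s z₀ z := by
  rw [delta_identity (m := m)]
  have h1 := delta_nonneg hs0 hs1 z₀ m
  have h2 := delta_nonneg hs0 hs1 m z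
  linarith

lemma delta_le (hs0 : 0 < s) (hs1 : s < 1) (z₀ z : ℝ) :
    deltaH s z₀ z ≤ (hder s z - hder s z₀) * (z - z₀) := by
  have := delta_add' (s := s) z₀ z
  have h2 := delta_nonneg hs0 hs1 z z₀
  linarith

lemma hasDerivAt_g (hs0 : 0 < s) (hs1 : s < 1) (z₀ x : ℝ) :
    HasDerivAt (fun z => deltaH s z₀ z) (hder s x - hder s z₀) x := by
  have h1 : HasDerivAt (fun z : ℝ => hfun s z - hfun s z₀ - hder s z₀ * (z - z₀))
      (hder s x - hder s z₀ * 1) x := by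
    exact ((hasDerivAt_hfun hs0 hs1 x).sub_const (hfun s z₀)).sub
      (((hasDerivAt_id x).sub_const z₀).const_mul (hder s z₀))
  simpa [deltaH] using h1

lemma continuous_g (hs0 : 0 < s) (z₀ : ℝ) : Continuous (fun z => deltaH s z₀ z) := by
  unfold deltaH
  exact ((continuous_hfun hs0).sub continuous_const).sub
    (continuous_const.mul (continuous_id.sub continuous_const))

lemma g_strictMonoOn (hs0 : 0 < s) (hs1 : s < 1) (z₀ : ℝ) :
    StrictMonoOn (fun z => deltaH s z₀ z) (Ici z₀) := by
  apply strictMonoOn_of_deriv_pos (convex_Ici z₀) (continuous_g hs0 z₀).continuousOn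
  intro x hx
  rw [interior_Ici] at hx
  rw [(hasDerivAt_g hs0 hs1 z₀ x).deriv]
  have := hder_strictMono hs0 hs1 hx
  linarith

lemma right_endpoint (hs0 : 0 < s) (hs1 : s < 1) {R : ℝ} (hR : 0 < R) (z₀ : ℝ) :
    ∃ b, z₀ < b ∧ deltaH s z₀ b = R ∧ ∀ z, z₀ ≤ z → (deltaH s z₀ z < R ↔ z < b) := by
  have hW : 0 < hder s (z₀ + 1) - hder s z₀ := by
    have := hder_strictMono hs0 hs1 (lt_add_one z₀)
    linarith
  obtain ⟨M, hM⟩ : ∃ M : ℝ, M = z₀ + 1 + R / (hder s (z₀ + 1) - hder s z₀) := ⟨_, rfl⟩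
  have hdiv : 0 < R / (hder s (z₀ + 1) - hder s z₀) := div_pos hR hW
  have hMg : R ≤ deltaH s z₀ M := by
    have h1 := delta_ge hs0 hs1 z₀ (z₀ + 1) M
    have h2 : (hder s (z₀ + 1) - hder s z₀) * (M - (z₀ + 1)) = R := by
      rw [hM]
      field_simp
      ring
    linarith
  have hz₀M : z₀ ≤ M := by linarith
  have hmem : R ∈ Icc ((fun z => deltaH s z₀ z) z₀) ((fun z => deltaH s z₀ z) M) := by
    simp only [delta_refl]
    exact ⟨hR.le, hMg⟩
  obtain ⟨b, hbmem, hgb⟩ := intermediate_value_Icc hz₀M (continuous_g hs0 z₀).continuousOn hmem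
  simp only at hgb
  refine ⟨b, ?_, hgb, ?_⟩
  · rcases eq_or_lt_of_le hbmem.1 with h | h
    · exfalso
      rw [← h, delta_refl] at hgb
      exact hR.ne hgb
    · exact h
  · intro z hz
    constructor
    · intro hlt
      by_contra hzb
      push_neg at hzb
      have := (g_strictMonoOn hs0 hs1 z₀).monotoneOn hbmem.1 hz hzb
      rw [hgb] at this
      exact absurd (lt_of_le_of_lt this hlt) (lt_irrefl R)
    · intro hlt
      have := (g_strictMonoOn hs0 hs1 z₀) hz hbmem.1 hlt
      simp only at this
      rw [hgb] at this
      exact this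

lemma section_eq (hs0 : 0 < s) (hs1 : s < 1) {R : ℝ} (hR : 0 < R) (z₀ : ℝ) :
    ∃ a b, a < z₀ ∧ z₀ < b ∧ secH s R z₀ = Ioo a b ∧
      deltaH s z₀ a = R ∧ deltaH s z₀ b = R := by
  obtain ⟨b, hzb, hgb, hiffb⟩ := right_endpoint hs0 hs1 hR z₀
  obtain ⟨b', hzb', hgb', hiffb'⟩ := right_endpoint hs0 hs1 hR (-z₀)
  have ha : deltaH s z₀ (-b') = R := by
    have h := delta_symm' (s := s) z₀ (-b')
    rw [neg_neg] at h
    rw [← h]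
    exact hgb'
  refine ⟨-b', b, by linarith, hzb, ?_, ha, hgb⟩
  ext z
  simp only [secH, mem_setOf_eq, mem_Ioo]
  rcases le_or_gt z₀ z with hz | hz
  · rw [hiffb z hz]
    constructor
    · intro h; exact ⟨by linarith, h⟩
    · intro h; exact h.2
  · have hmap : deltaH s z₀ z = deltaH s (-z₀) (-z) := (delta_symm' z₀ z).symm
    rw [hmap, hiffb' (-z) (by linarith)]
    constructor
    · intro h; constructor <;> linarith
    · intro h; linarith [h.1]

lemma E_gt (hs0 : 0 < s) (hs1 : s < 1) : (-1 : ℝ) < 1 / s - 2 := by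
  have := q_pos hs0 hs1; linarith

lemma II_abs_rpow (hs0 : 0 < s) (hs1 : s < 1) (a b : ℝ) :
    IntervalIntegrable (fun u : ℝ => |u| ^ (1 / s - 2)) volume a b := by
  have hE := E_gt hs0 hs1
  have H : ∀ c : ℝ, 0 ≤ c →
      IntervalIntegrable (fun u : ℝ => |u| ^ (1 / s - 2)) volume 0 c := by
    intro c hc
    rw [intervalIntegrable_iff, uIoc_of_le hc]
    have base := intervalIntegral.intervalIntegrable_rpow' (a := 0) (b := c) hE
    rw [intervalIntegrable_iff, uIoc_of_le hc] at base
    refine base.congr_fun ?_ measurableSet_Ioc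
    intro x hx
    show x ^ (1 / s - 2) = |x| ^ (1 / s - 2)
    rw [abs_of_pos hx.1]
  have key : ∀ c : ℝ, IntervalIntegrable (fun u : ℝ => |u| ^ (1 / s - 2)) volume 0 c := by
    intro c
    rcases le_or_gt 0 c with hc | hc
    · exact H c hc
    · have h2 := H (-c) (by linarith)
      have h3 := (IntervalIntegrable.iff_comp_neg (f := fun u : ℝ => |u| ^ (1 / s - 2))
        (a := 0) (b := -c)).mp h2
      simp only [abs_neg, neg_neg, neg_zero] at h3
      exact h3
  exact (key a).symm.trans (key b)

lemma integral_rpow_zero (hs0 : 0 < s) (hs1 : s < 1) (t : ℝ) :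
    ∫ u in (0:ℝ)..t, |u| ^ (1 / s - 2) = hder s t := by
  rcases le_or_gt 0 t with ht | ht
  · have := intervalIntegral.integral_eq_sub_of_hasDeriv_right_of_le ht
      ((continuous_hder hs0 hs1).continuousOn)
      (fun x hx => (hasDerivAt_hder hs0 hs1 hx.1.ne').hasDerivWithinAt)
      (II_abs_rpow hs0 hs1 0 t)
    rw [this, hder_zero, sub_zero]
  · have := intervalIntegral.integral_eq_sub_of_hasDeriv_right_of_le ht.le
      ((continuous_hder hs0 hs1).continuousOn)
      (fun x hx => (hasDerivAt_hder hs0 hs1 hx.2.ne).hasDerivWithinAt)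
      (II_abs_rpow hs0 hs1 t 0)
    rw [intervalIntegral.integral_symm, this, hder_zero]
    ring

lemma integral_rpow (hs0 : 0 < s) (hs1 : s < 1) (a b : ℝ) :
    ∫ u in a..b, |u| ^ (1 / s - 2) = hder s b - hder s a := by
  have h := intervalIntegral.integral_add_adjacent_intervals
    (II_abs_rpow hs0 hs1 a 0) (II_abs_rpow hs0 hs1 0 b)
  have h1 : ∫ u in a..(0:ℝ), |u| ^ (1 / s - 2) = - hder s a := by
    rw [intervalIntegral.integral_symm, integral_rpow_zero hs0 hs1]
  rw [h1, integral_rpow_zero hs0 hs1] at h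
  linarith

lemma muH_Ioo (hs0 : 0 < s) (hs1 : s < 1) {a b : ℝ} (hab : a ≤ b) :
    muH s (Ioo a b) = ENNReal.ofReal (hder s b - hder s a) := by
  rw [muH, withDensity_apply _ measurableSet_Ioo]
  have hint : IntegrableOn (fun u : ℝ => |u| ^ (1 / s - 2)) (Ioo a b) volume := by
    have := (intervalIntegrable_iff_integrableOn_Ioo_of_le hab).mp (II_abs_rpow hs0 hs1 a b)
    exact this
  rw [← ofReal_integral_eq_lintegral_ofReal hint
    (Filter.Eventually.of_forall fun x => Real.rpow_nonneg (abs_nonneg x) _)]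
  congr 1
  rw [← MeasureTheory.integral_Ioc_eq_integral_Ioo, ← intervalIntegral.integral_of_le hab]
  exact integral_rpow hs0 hs1 a b

set_option maxHeartbeats 1600000 in
lemma psi_AID {q : ℝ} (hq : 0 < q) :
    ∃ Γ : ℝ, 1 ≤ Γ ∧ ∀ y : ℝ, psi q (y + 1) - psi q y ≤ Γ * (psi q y - psi q (y - 1)) := by
  have h2q : (1:ℝ) < 2 ^ q := by
    rw [show (1:ℝ) = 1 ^ q by rw [Real.one_rpow]]
    exact Real.rpow_lt_rpow (by norm_num) (by norm_num) hq
  have h32 : (2:ℝ) ^ q < 3 ^ q := Real.rpow_lt_rpow (by norm_num) (by norm_num) hq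
  have h2q0 : (0:ℝ) < 2 ^ q := Real.rpow_pos_of_pos (by norm_num) q
  have hd1 : (0:ℝ) < 2 ^ q - 1 := by linarith
  have hd2 : (0:ℝ) < 3 ^ q - 2 ^ q := by linarith
  have hf0 : (0:ℝ) ^ q = 0 := Real.zero_rpow hq.ne'
  have hf1 : (1:ℝ) ^ q = 1 := Real.one_rpow q
  obtain ⟨Γ, hΓ⟩ : ∃ Γ : ℝ, Γ = 2 / (2 ^ q - 1) + 1 / (3 ^ q - 2 ^ q) + 2 ^ q * 2 ^ q + 2 ^ q + 2 :=
    ⟨_, rfl⟩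
  have ht1 : 0 < 2 / ((2:ℝ) ^ q - 1) := by positivity
  have ht2 : 0 < 1 / ((3:ℝ) ^ q - 2 ^ q) := by positivity
  have hsq : 0 < (2:ℝ) ^ q * 2 ^ q := mul_pos h2q0 h2q0
  have hΓ1 : 1 ≤ Γ := by rw [hΓ]; nlinarith [ht1, ht2, hsq, h2q0]
  have hΓ0 : 0 ≤ Γ := by linarith
  refine ⟨Γ, hΓ1, ?_⟩
  intro y
  rcases le_or_gt q 1 with hq1 | hq1
  · -- concave case
    have hcc : ConcaveOn ℝ (Ici 0) (fun u : ℝ => u ^ q) := Real.concaveOn_rpow hq.le hq1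
    rcases le_or_gt 1 y with hy1 | hy1
    · -- 1 ≤ y
      rw [psi_of_nonneg (by linarith), psi_of_nonneg (by linarith),
        psi_of_nonneg (by linarith : (0:ℝ) ≤ y - 1)]
      have key := diffmono_of_concaveOn hcc (a := y - 1) (b := y) (t := 1)
        (by linarith) (by linarith) (by norm_num)
      rw [show y - 1 + 1 = y by ring] at key
      have hDge : 0 ≤ y ^ q - (y - 1) ^ q := by
        have := Real.rpow_le_rpow (by linarith : (0:ℝ) ≤ y - 1) (by linarith : y - 1 ≤ y) hq.le
        linarith
      nlinarith [mul_nonneg (by linarith : (0:ℝ) ≤ Γ - 1) hDge]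
    rcases le_or_gt 0 y with hy0 | hy0
    · -- 0 ≤ y < 1
      rw [psi_of_nonneg (by linarith), psi_of_nonneg (by linarith),
        psi_of_neg (by linarith : y - 1 < 0), (by ring : -(y - 1) = 1 - y)]
      have hN : (y + 1) ^ q - y ^ q ≤ 1 := by
        have key := diffmono_of_concaveOn hcc (a := 0) (b := y) (t := 1)
          (le_refl 0) hy0 (by norm_num)
        simp only [zero_add, hf0, hf1] at key
        linarith
      have hcy : y ≤ y ^ q := by
        have := hcc.2 (mem_Ici.mpr (by norm_num : (0:ℝ) ≤ 1)) (mem_Ici.mpr (le_refl (0:ℝ)))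
          hy0 (by linarith : (0:ℝ) ≤ 1 - y) (by ring)
        simp only [smul_eq_mul, mul_one, mul_zero, add_zero, hf0, hf1] at this
        linarith
      have hcy' : 1 - y ≤ (1 - y) ^ q := by
        have := hcc.2 (mem_Ici.mpr (by norm_num : (0:ℝ) ≤ 1)) (mem_Ici.mpr (le_refl (0:ℝ)))
          (by linarith : (0:ℝ) ≤ 1 - y) (by linarith : (0:ℝ) ≤ y) (by ring)
        simp only [smul_eq_mul, mul_one, mul_zero, add_zero, hf0, hf1] at this
        linarith
      have hD1 : 1 ≤ y ^ q - -(1 - y) ^ q := by linarith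
      have h3 : (1:ℝ) * 1 ≤ Γ * (y ^ q - -(1 - y) ^ q) :=
        mul_le_mul hΓ1 hD1 (by norm_num) hΓ0
      linarith
    rcases le_or_gt (-1) y with hym1 | hym1
    · -- -1 ≤ y < 0
      rw [psi_of_nonneg (by linarith : (0:ℝ) ≤ y + 1), psi_of_neg hy0,
        psi_of_neg (by linarith : y - 1 < 0), (by ring : -(y - 1) = 1 - y)]
      have hN : (y + 1) ^ q + (-y) ^ q ≤ 2 := by
        have n1 : (y + 1) ^ q ≤ 1 := Real.rpow_le_one (by linarith) (by linarith) hq.le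
        have n2 : (-y) ^ q ≤ 1 := Real.rpow_le_one (by linarith) (by linarith) hq.le
        linarith
      have hD : 2 ^ q - 1 ≤ (1 - y) ^ q - (-y) ^ q := by
        have key := diffmono_of_concaveOn hcc (a := -y) (b := 1) (t := 1)
          (by linarith) (by linarith) (by norm_num)
        rw [show (1:ℝ) + 1 = 2 by norm_num, hf1, show -y + 1 = 1 - y by ring] at key
        linarith
      have hγ : 2 / (2 ^ q - 1) ≤ Γ := by rw [hΓ]; nlinarith [ht2, hsq, h2q0]
      have h5 : 2 / (2 ^ q - 1) * (2 ^ q - 1) ≤ Γ * ((1 - y) ^ q - (-y) ^ q) :=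
        mul_le_mul hγ hD hd1.le hΓ0
      rw [div_mul_cancel₀ _ hd1.ne'] at h5
      nlinarith [h5]
    rcases le_or_gt (-2) y with hym2 | hym2
    · -- -2 ≤ y < -1
      rw [psi_of_neg (by linarith : y + 1 < 0), psi_of_neg hy0,
        psi_of_neg (by linarith : y - 1 < 0), (by ring : -(y - 1) = 1 - y),
        (by ring : -(y + 1) = -y - 1)]
      have hN : -(-y - 1) ^ q - -(-y) ^ q ≤ 1 := by
        have key := diffmono_of_concaveOn hcc (a := 0) (b := -y - 1) (t := 1)
          (le_refl 0) (by linarith) (by norm_num)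
        simp only [zero_add, hf0, hf1] at key
        rw [show -y - 1 + 1 = -y by ring] at key
        linarith
      have hD : 3 ^ q - 2 ^ q ≤ (1 - y) ^ q - (-y) ^ q := by
        have key := diffmono_of_concaveOn hcc (a := -y) (b := 2) (t := 1)
          (by linarith) (by linarith) (by norm_num)
        rw [show (2:ℝ) + 1 = 3 by norm_num, show -y + 1 = 1 - y by ring] at key
        linarith
      have hγ : 1 / (3 ^ q - 2 ^ q) ≤ Γ := by rw [hΓ]; nlinarith [ht1, hsq, h2q0]
      have h5 : 1 / (3 ^ q - 2 ^ q) * (3 ^ q - 2 ^ q) ≤ Γ * ((1 - y) ^ q - (-y) ^ q) :=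
        mul_le_mul hγ hD hd2.le hΓ0
      rw [div_mul_cancel₀ _ hd2.ne'] at h5
      nlinarith [h5]
    · -- y < -2
      rw [psi_of_neg (by linarith : y + 1 < 0), psi_of_neg hy0,
        psi_of_neg (by linarith : y - 1 < 0), (by ring : -(y - 1) = 1 - y),
        (by ring : -(y + 1) = -y - 1)]
      have hupos : (0:ℝ) < -y := by linarith
      have hfu : (0:ℝ) < (-y) ^ q := Real.rpow_pos_of_pos hupos q
      have hN : ((-y) ^ q - (-y - 1) ^ q) * (-y / 2) ≤ (-y) ^ q := by
        have key := slope4_of_concaveOn hcc (a := -y / 2) (b := -y) (c := -y - 1) (d := -y)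
          (by linarith) (by linarith) (by linarith) (by linarith) (by linarith) (le_refl _)
        have hfu2 : (0:ℝ) ≤ (-y / 2) ^ q := Real.rpow_nonneg (by linarith) q
        nlinarith [key]
      have hD : (2 ^ q - 1) * (-y) ^ q ≤ ((1 - y) ^ q - (-y) ^ q) * (-y) := by
        have key := slope4_of_concaveOn hcc (a := -y) (b := -y + 1) (c := -y) (d := 2 * (-y))
          (by linarith) (by linarith) (by linarith) (by linarith) (le_refl _) (by linarith)
        have h2u : (2 * (-y)) ^ q = 2 ^ q * (-y) ^ q :=
          Real.mul_rpow (by norm_num) (by linarith)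
        rw [h2u, show -y + 1 = 1 - y by ring] at key
        nlinarith [key]
      have hDpos : 0 ≤ (1 - y) ^ q - (-y) ^ q := by
        have := Real.rpow_le_rpow (by linarith : (0:ℝ) ≤ -y) (by linarith : -y ≤ 1 - y) hq.le
        linarith
      have hstep : ((-y) ^ q - (-y - 1) ^ q) * (2 ^ q - 1) ≤
          2 * ((1 - y) ^ q - (-y) ^ q) := by
        nlinarith [hN, hD, hupos, hd1, mul_le_mul_of_nonneg_left hN hd1.le]
      have hγ : 2 / (2 ^ q - 1) ≤ Γ := by rw [hΓ]; nlinarith [ht2, hsq, h2q0]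
      have h6 : (-y) ^ q - (-y - 1) ^ q ≤ 2 / (2 ^ q - 1) * ((1 - y) ^ q - (-y) ^ q) := by
        rw [div_mul_eq_mul_div, le_div_iff₀ hd1]
        linarith
      have h7 : 2 / (2 ^ q - 1) * ((1 - y) ^ q - (-y) ^ q) ≤
          Γ * ((1 - y) ^ q - (-y) ^ q) := mul_le_mul_of_nonneg_right hγ hDpos
      nlinarith [h6, h7]
  · -- convex case
    have hcv : ConvexOn ℝ (Ici 0) (fun u : ℝ => u ^ q) := convexOn_rpow hq1.le
    rcases le_or_gt 1 y with hy1 | hy1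
    · -- 1 ≤ y
      rw [psi_of_nonneg (by linarith), psi_of_nonneg (by linarith),
        psi_of_nonneg (by linarith : (0:ℝ) ≤ y - 1)]
      have hy0 : (0:ℝ) < y := by linarith
      have hfy : (0:ℝ) < y ^ q := Real.rpow_pos_of_pos hy0 q
      have hN : ((y + 1) ^ q - y ^ q) * y ≤ (2 ^ q - 1) * y ^ q := by
        have key := slope4_of_convexOn hcv (a := y) (b := y + 1) (c := y) (d := 2 * y)
          (by linarith) (by linarith) (by linarith) (by linarith) (le_refl _) (by linarith)
        have h2u : (2 * y) ^ q = 2 ^ q * y ^ q := Real.mul_rpow (by norm_num) (by linarith)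
        rw [h2u] at key
        nlinarith [key]
      have hD : y ^ q ≤ (y ^ q - (y - 1) ^ q) * y := by
        have key := slope4_of_convexOn hcv (a := 0) (b := y) (c := y - 1) (d := y)
          (le_refl 0) (by linarith) (by linarith) (by linarith) (by linarith) (le_refl _)
        rw [hf0] at key
        nlinarith [key]
      have hDge : 0 ≤ y ^ q - (y - 1) ^ q := by
        have := Real.rpow_le_rpow (by linarith : (0:ℝ) ≤ y - 1) (by linarith : y - 1 ≤ y) hq.le
        linarith
      have hstep : (y + 1) ^ q - y ^ q ≤ (2 ^ q - 1) * (y ^ q - (y - 1) ^ q) := by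
        nlinarith [hN, hD, hy0, hd1, mul_le_mul_of_nonneg_left hD hd1.le]
      have hγ : 2 ^ q - 1 ≤ Γ := by rw [hΓ]; nlinarith [ht1, ht2, hsq]
      nlinarith [mul_le_mul_of_nonneg_right hγ hDge]
    rcases le_or_gt 0 y with hy0 | hy0
    · -- 0 ≤ y < 1
      rw [psi_of_nonneg (by linarith), psi_of_nonneg (by linarith),
        psi_of_neg (by linarith : y - 1 < 0), (by ring : -(y - 1) = 1 - y)]
      have hN : (y + 1) ^ q - y ^ q ≤ 2 ^ q := by
        have h1 : (y + 1) ^ q ≤ 2 ^ q := Real.rpow_le_rpow (by linarith) (by linarith) hq.le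
        have h2 : 0 ≤ y ^ q := Real.rpow_nonneg hy0 q
        linarith
      have hhalf : ((1:ℝ)/2) ^ q ≤ (1/2) * y ^ q + (1/2) * (1 - y) ^ q := by
        have h0 := hcv.2 (mem_Ici.mpr hy0) (mem_Ici.mpr (by linarith : (0:ℝ) ≤ 1 - y))
          (by norm_num : (0:ℝ) ≤ 1/2) (by norm_num : (0:ℝ) ≤ 1/2) (by norm_num)
        have e : (1/2 : ℝ) • y + (1/2 : ℝ) • (1 - y) = 1/2 := by
          simp only [smul_eq_mul]; ring
        rw [e] at h0
        simpa using h0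
      have hprod : (2:ℝ) ^ q * (1/2) ^ q = 1 := by
        rw [← Real.mul_rpow (by norm_num) (by norm_num)]
        norm_num
      have hD1 : 2 * ((1:ℝ)/2) ^ q ≤ y ^ q - -(1 - y) ^ q := by linarith
      have hγ : 2 ^ q * 2 ^ q ≤ Γ := by rw [hΓ]; nlinarith [ht1, ht2, h2q0]
      have hhalfpos : (0:ℝ) ≤ 2 * ((1:ℝ)/2) ^ q := by positivity
      have h5 : 2 ^ q * 2 ^ q * (2 * ((1:ℝ)/2) ^ q) ≤ Γ * (y ^ q - -(1 - y) ^ q) :=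
        mul_le_mul hγ hD1 hhalfpos hΓ0
      have hLHS : 2 ^ q * 2 ^ q * (2 * ((1:ℝ)/2) ^ q) = 2 * (2 ^ q * (2 ^ q * (1/2) ^ q)) := by
        ring
      rw [hLHS, hprod, mul_one] at h5
      linarith
    rcases le_or_gt (-1) y with hym1 | hym1
    · -- -1 ≤ y < 0
      rw [psi_of_nonneg (by linarith : (0:ℝ) ≤ y + 1), psi_of_neg hy0,
        psi_of_neg (by linarith : y - 1 < 0), (by ring : -(y - 1) = 1 - y)]
      have hN : (y + 1) ^ q + (-y) ^ q ≤ 2 := by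
        have n1 : (y + 1) ^ q ≤ 1 := Real.rpow_le_one (by linarith) (by linarith) hq.le
        have n2 : (-y) ^ q ≤ 1 := Real.rpow_le_one (by linarith) (by linarith) hq.le
        linarith
      have hD : 1 ≤ (1 - y) ^ q - (-y) ^ q := by
        have key := diffmono_of_convexOn hcv (a := 0) (b := -y) (t := 1)
          (le_refl 0) (by linarith) (by norm_num)
        simp only [zero_add, hf0, hf1] at key
        rw [show -y + 1 = 1 - y by ring] at key
        linarith
      have hγ : (2:ℝ) ≤ Γ := by rw [hΓ]; nlinarith [ht1, ht2, hsq, h2q0]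
      have h5 : (2:ℝ) * 1 ≤ Γ * ((1 - y) ^ q - (-y) ^ q) :=
        mul_le_mul hγ hD (by norm_num) hΓ0
      nlinarith [h5]
    · -- y < -1
      rw [psi_of_neg (by linarith : y + 1 < 0), psi_of_neg hy0,
        psi_of_neg (by linarith : y - 1 < 0), (by ring : -(y - 1) = 1 - y),
        (by ring : -(y + 1) = -y - 1)]
      have key := diffmono_of_convexOn hcv (a := -y - 1) (b := -y) (t := 1)
        (by linarith) (by linarith) (by norm_num)
      rw [show -y - 1 + 1 = -y by ring, show -y + 1 = 1 - y by ring] at key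
      have hDge : 0 ≤ (1 - y) ^ q - (-y) ^ q := by
        have := Real.rpow_le_rpow (by linarith : (0:ℝ) ≤ -y) (by linarith : -y ≤ 1 - y) hq.le
        linarith
      nlinarith [mul_nonneg (by linarith : (0:ℝ) ≤ Γ - 1) hDge, key]



lemma hder_eq_psi (hs0 : 0 < s) (hs1 : s < 1) (y : ℝ) :
    hder s y = s / (1 - s) * psi (1 / s - 1) y := by
  rcases le_or_gt 0 y with hy | hy
  · rw [hder_of_nonneg hs0 hs1 hy, psi_of_nonneg hy]
  · rw [psi_of_neg hy]
    have h1 := hder_neg' (s := s) (-y)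
    rw [neg_neg] at h1
    rw [show hder s y = - hder s (-y) by linarith [h1]]
    rw [hder_of_nonneg hs0 hs1 (by linarith : (0:ℝ) ≤ -y)]
    ring

lemma hder_AID (hs0 : 0 < s) (hs1 : s < 1) :
    ∃ Γ : ℝ, 1 ≤ Γ ∧ ∀ x h : ℝ, 0 < h →
      hder s (x + h) - hder s x ≤ Γ * (hder s x - hder s (x - h)) := by
  have hq := q_pos hs0 hs1
  obtain ⟨Γ, hΓ1, hΓ⟩ := psi_AID hq
  refine ⟨Γ, hΓ1, ?_⟩
  intro x h hh
  have base := hΓ (x / h)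
  have e1 : h * (x / h + 1) = x + h := by field_simp
  have e2 : h * (x / h) = x := by field_simp
  have e3 : h * (x / h - 1) = x - h := by field_simp
  have hpow : (0:ℝ) < h ^ (1/s - 1) := Real.rpow_pos_of_pos hh _
  have key : psi (1/s - 1) (x + h) - psi (1/s - 1) x ≤
      Γ * (psi (1/s - 1) x - psi (1/s - 1) (x - h)) := by
    have base2 : psi (1/s - 1) (h * (x / h + 1)) - psi (1/s - 1) (h * (x / h)) ≤
        Γ * (psi (1/s - 1) (h * (x / h)) - psi (1/s - 1) (h * (x / h - 1))) := by
      rw [psi_smul hq hh, psi_smul hq hh, psi_smul hq hh]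
      nlinarith [mul_le_mul_of_nonneg_left base hpow.le]
    rw [e1, e2, e3] at base2
    exact base2
  have c0pos := c0_pos hs0 hs1
  rw [hder_eq_psi hs0 hs1, hder_eq_psi hs0 hs1, hder_eq_psi hs0 hs1]
  nlinarith [mul_le_mul_of_nonneg_left key c0pos.le]

lemma hder_AID_both (hs0 : 0 < s) (hs1 : s < 1) :
    ∃ Γ : ℝ, 1 ≤ Γ ∧ ∀ x h : ℝ, 0 < h →
      (hder s (x + h) - hder s x ≤ Γ * (hder s x - hder s (x - h))) ∧
      (hder s x - hder s (x - h) ≤ Γ * (hder s (x + h) - hder s x)) := by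
  obtain ⟨Γ, hΓ1, H⟩ := hder_AID hs0 hs1
  refine ⟨Γ, hΓ1, fun x h hh => ⟨H x h hh, ?_⟩⟩
  have h2 := H (-x) h hh
  rw [show -x + h = -(x - h) by ring, show -x - h = -(x + h) by ring,
    hder_neg', hder_neg', hder_neg'] at h2
  linarith

end SecSize

set_option maxHeartbeats 2000000 in
/-- **Lemma 3.3: size of one-dimensional sections:** `cR ≤ |S_R(z)|·μ_h(S_R(z)) ≤ CR`. -/
theorem section_size (s : ℝ) (hs0 : 0 < s) (hs1 : s < 1) :
    ∃ c C : ℝ, 0 < c ∧ 0 < C ∧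
      ∀ (R z : ℝ), 0 < R →
        c * R ≤ (volume (secH s R z)).toReal * (muH s (secH s R z)).toReal ∧
        (volume (secH s R z)).toReal * (muH s (secH s R z)).toReal ≤ C * R := by
  obtain ⟨Γ, hΓ1, hAID⟩ := SecSize.hder_AID_both hs0 hs1
  refine ⟨1, 2 * (1 + Γ) * (2 + 2 * (2 * Γ + 2)), one_pos, by nlinarith, ?_⟩
  intro R z₀ hR
  obtain ⟨α, β, hαz, hzβ, hsec, hgα, hgβ⟩ := SecSize.section_eq hs0 hs1 hR z₀
  have hmono := SecSize.hder_strictMono hs0 hs1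
  have hWr : 0 < hder s β - hder s z₀ := by have := hmono hzβ; linarith
  have hWl : 0 < hder s z₀ - hder s α := by have := hmono hαz; linarith
  have hvol : (volume (secH s R z₀)).toReal = β - α := by
    rw [hsec, Real.volume_Ioo, ENNReal.toReal_ofReal (by linarith)]
  have hmu : (muH s (secH s R z₀)).toReal = hder s β - hder s α := by
    rw [hsec, SecSize.muH_Ioo hs0 hs1 (by linarith : α ≤ β),
      ENNReal.toReal_ofReal (by linarith)]
  rw [hvol, hmu]
  have hlow := SecSize.delta_le hs0 hs1 z₀ β
  rw [hgβ] at hlow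
  have hupl := SecSize.delta_le hs0 hs1 z₀ α
  rw [hgα] at hupl
  constructor
  · -- lower bound
    nlinarith [hlow, mul_pos (by linarith : (0:ℝ) < β - z₀) hWl,
      mul_pos (by linarith : (0:ℝ) < z₀ - α) hWr,
      mul_pos (by linarith : (0:ℝ) < z₀ - α) hWl]
  · -- upper bound
    have htp : (0:ℝ) < β - z₀ := by linarith
    have htm : (0:ℝ) < z₀ - α := by linarith
    -- midpoint quantities
    have hWmr : 0 < hder s (z₀ + (β - z₀) / 2) - hder s z₀ := by
      have := hmono (show z₀ < z₀ + (β - z₀) / 2 by linarith)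
      linarith
    have hWml : 0 < hder s z₀ - hder s (z₀ - (z₀ - α) / 2) := by
      have := hmono (show z₀ - (z₀ - α) / 2 < z₀ by linarith)
      linarith
    -- AID at the right midpoint
    have AIDr := (hAID (z₀ + (β - z₀) / 2) ((β - z₀) / 2) (by linarith)).1
    rw [show z₀ + (β - z₀) / 2 + (β - z₀) / 2 = β by ring,
      show z₀ + (β - z₀) / 2 - (β - z₀) / 2 = z₀ by ring] at AIDr
    -- AID at the left midpoint
    have AIDl := (hAID (z₀ - (z₀ - α) / 2) ((z₀ - α) / 2) (by linarith)).2
    rw [show z₀ - (z₀ - α) / 2 - (z₀ - α) / 2 = α by ring,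
      show z₀ - (z₀ - α) / 2 + (z₀ - α) / 2 = z₀ by ring] at AIDl
    -- R dominates midpoint products
    have Rr := SecSize.delta_ge hs0 hs1 z₀ (z₀ + (β - z₀) / 2) β
    rw [hgβ] at Rr
    have Rl := SecSize.delta_ge hs0 hs1 z₀ (z₀ - (z₀ - α) / 2) α
    rw [hgα] at Rl
    -- diagonal products
    have Fr : (β - z₀) * (hder s β - hder s z₀) ≤ 2 * (1 + Γ) * R := by
      nlinarith [AIDr, Rr, htp, hWmr, hΓ1,
        mul_le_mul_of_nonneg_left AIDr htp.le]
    have Fl : (z₀ - α) * (hder s z₀ - hder s α) ≤ 2 * (1 + Γ) * R := by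
      nlinarith [AIDl, Rl, htm, hWml, hΓ1,
        mul_le_mul_of_nonneg_left AIDl htm.le]
    -- arm comparability
    have armp : β - z₀ ≤ (2 * Γ + 2) * (z₀ - α) := by
      rcases le_or_gt (β - z₀) (2 * (z₀ - α)) with hcase | hcase
      · nlinarith [htm, hΓ1]
      · have AIDz := (hAID z₀ (z₀ - α) htm).2
        rw [show z₀ - (z₀ - α) = α by ring] at AIDz
        have hmonostep : hder s (z₀ + (z₀ - α)) ≤ hder s (z₀ + (β - z₀) / 2) :=
          hmono.monotone (by linarith)
        have hch : hder s z₀ - hder s α ≤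
            Γ * (hder s (z₀ + (β - z₀) / 2) - hder s z₀) :=
          AIDz.trans (mul_le_mul_of_nonneg_left (by linarith) (by linarith : (0:ℝ) ≤ Γ))
        have k2 : R ≤ (z₀ - α) * (Γ * (hder s (z₀ + (β - z₀) / 2) - hder s z₀)) := by
          have := mul_le_mul_of_nonneg_left hch htm.le
          nlinarith [hupl]
        nlinarith [Rr, k2, hWmr, htm, htp, hΓ1]
    have armm : z₀ - α ≤ (2 * Γ + 2) * (β - z₀) := by
      rcases le_or_gt (z₀ - α) (2 * (β - z₀)) with hcase | hcase
      · nlinarith [htp, hΓ1]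
      · have AIDz := (hAID z₀ (β - z₀) htp).1
        rw [show z₀ + (β - z₀) = β by ring] at AIDz
        have hmonostep : hder s (z₀ - (z₀ - α) / 2) ≤ hder s (z₀ - (β - z₀)) :=
          hmono.monotone (by linarith)
        have hch : hder s β - hder s z₀ ≤
            Γ * (hder s z₀ - hder s (z₀ - (z₀ - α) / 2)) :=
          AIDz.trans (mul_le_mul_of_nonneg_left (by linarith) (by linarith : (0:ℝ) ≤ Γ))
        have k2 : R ≤ (β - z₀) * (Γ * (hder s z₀ - hder s (z₀ - (z₀ - α) / 2))) := by
          have := mul_le_mul_of_nonneg_left hch htp.le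
          nlinarith [hlow]
        nlinarith [Rl, k2, hWml, htm, htp, hΓ1]
    -- cross products
    have cross1 : (z₀ - α) * (hder s β - hder s z₀) ≤ (2 * Γ + 2) * (2 * (1 + Γ) * R) := by
      have h1 := mul_le_mul_of_nonneg_right armm hWr.le
      nlinarith [Fr, h1, hΓ1]
    have cross2 : (β - z₀) * (hder s z₀ - hder s α) ≤ (2 * Γ + 2) * (2 * (1 + Γ) * R) := by
      have h1 := mul_le_mul_of_nonneg_right armp hWl.le
      nlinarith [Fl, h1, hΓ1]
    nlinarith [Fr, Fl, cross1, cross2]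
end
end

section
/- Engulfing property of Monge–Ampère cubes and sections (Lemma 3.4): (1) For every x₀ ∈ ℝⁿ there exist constants C₀ > 0 and p₀ ≥ 1, depending only on n, such that for all 0 < r₁ < r₂ ≤ 1, all t > 0, and all x₁ ∈ Q_{r₁ t}(x₀), one has Q_{C₀ (r₂ − r₁)^{p₀} t}(x₁) ⊂ Q_{r₂ t}(x₀). (2) For every z₀ ∈ ℝ there exist constants C₁ > 0 and p₁ ≥ 1, depending only on s, such that for all 0 < r₁ < r₂ ≤ 1, all t > 0, and all z₁ ∈ S_{r₁ t}(z₀), one has S_{C₁ (r₂ − r₁)^{p₁} t}(z₁) ⊂ S_{r₂ t}(z₀). -/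
open Set Filter Topology MeasureTheory
open scoped RealInnerProductSpace

noncomputable section

/-- odd power `x ↦ x * |x| ^ (γ - 1) = sign x * |x| ^ γ`. -/
def eOp (γ x : ℝ) : ℝ := x * |x| ^ (γ - 1)

lemma eOp_zero (γ : ℝ) : eOp γ 0 = 0 := by simp [eOp]

lemma eOp_neg (γ x : ℝ) : eOp γ (-x) = - eOp γ x := by simp [eOp]

lemma eOp_of_nonneg {γ x : ℝ} (hγ : 0 < γ) (hx : 0 ≤ x) : eOp γ x = x ^ γ := by
  rcases eq_or_lt_of_le hx with rfl | hx
  · simp [eOp, Real.zero_rpow hγ.ne']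
  · rw [eOp, abs_of_pos hx]
    calc x * x ^ (γ - 1) = x ^ (1:ℝ) * x ^ (γ - 1) := by rw [Real.rpow_one]
    _ = x ^ (1 + (γ - 1)) := (Real.rpow_add hx 1 (γ-1)).symm
    _ = x ^ γ := by ring_nf

/-- upper bound, nonnegative case. -/
lemma up_nn {γ x y : ℝ} (hγ : 0 < γ) (hx : 0 ≤ x) (hxy : x ≤ y) :
    y ^ γ - x ^ γ ≤ (γ + 2) * (y - x) * y ^ (γ - 1) := by
  have hy : 0 ≤ y := hx.trans hxy
  rcases eq_or_lt_of_le hy with rfl | hy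
  · have hx0 : x = 0 := le_antisymm hxy hx
    simp [hx0, Real.zero_rpow hγ.ne']
  have hyγ : y ^ γ = y * y ^ (γ - 1) := by
    calc y ^ γ = y ^ (1 + (γ - 1)) := by ring_nf
    _ = y ^ (1:ℝ) * y ^ (γ - 1) := Real.rpow_add hy 1 (γ-1)
    _ = y * y ^ (γ - 1) := by rw [Real.rpow_one]
  have hyp : 0 ≤ y ^ (γ - 1) := Real.rpow_nonneg hy.le _
  rcases le_or_gt (y/2) x with hhalf | hhalf
  · -- x ≥ y/2 > 0
    have hx0 : 0 < x := lt_of_lt_of_le (by linarith) hhalf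
    rcases le_or_gt 1 γ with hγ1 | hγ1
    · -- tangent at y from below (Bernoulli, p = γ ≥ 1)
      have hu : -1 ≤ (x - y)/y := by
        rw [le_div_iff₀ hy]; linarith
      have hb := one_add_mul_self_le_rpow_one_add hu hγ1
      have h1u : (1 + (x-y)/y) = x / y := by field_simp; ring
      rw [h1u] at hb
      have hxy' : (x/y) ^ γ = x ^ γ / y ^ γ := Real.div_rpow hx hy.le γ
      rw [hxy'] at hb
      -- hb : 1 + γ * ((x-y)/y) ≤ x^γ / y^γ
      have hyγpos : 0 < y ^ γ := Real.rpow_pos_of_pos hy γ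
      have hb2 : (1 + γ * ((x-y)/y)) * y ^ γ ≤ x ^ γ := by
        rw [← le_div_iff₀ hyγpos]; exact hb
      have hexp : y ^ γ / y = y ^ (γ - 1) := by
        rw [Real.rpow_sub hy, Real.rpow_one]
      calc y ^ γ - x ^ γ ≤ y ^ γ - (1 + γ * ((x-y)/y)) * y ^ γ := by linarith
      _ = γ * (y - x) * (y ^ γ / y) := by field_simp; ring
      _ = γ * (y - x) * y ^ (γ - 1) := by rw [hexp]
      _ ≤ (γ + 2) * (y - x) * y ^ (γ - 1) := by
          have : 0 ≤ (y - x) * y ^ (γ - 1) := mul_nonneg (by linarith) hyp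
          nlinarith
    · -- γ < 1 : tangent at x from above (Bernoulli, p = γ ≤ 1)
      have hu : -1 ≤ (y - x)/x := by
        have : 0 ≤ (y - x)/x := div_nonneg (by linarith) hx0.le
        linarith
      have hb := rpow_one_add_le_one_add_mul_self hu hγ.le hγ1.le
      have h1u : (1 + (y-x)/x) = y / x := by field_simp; ring
      rw [h1u] at hb
      have hxy' : (y/x) ^ γ = y ^ γ / x ^ γ := Real.div_rpow hy.le hx0.le γ
      rw [hxy'] at hb
      have hxγpos : 0 < x ^ γ := Real.rpow_pos_of_pos hx0 γ
      have hb2 : y ^ γ ≤ (1 + γ * ((y-x)/x)) * x ^ γ := by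
        rw [← div_le_iff₀ hxγpos]; exact hb
      have hexp : x ^ γ / x = x ^ (γ - 1) := by
        rw [Real.rpow_sub hx0, Real.rpow_one]
      have hxm : x ^ (γ - 1) ≤ 2 * y ^ (γ - 1) := by
        have h2 : x ^ (γ - 1) ≤ (y/2) ^ (γ - 1) :=
          Real.rpow_le_rpow_of_nonpos (by linarith) hhalf (by linarith)
        have h3 : (y/2) ^ (γ-1) = y ^ (γ-1) / 2 ^ (γ-1) := Real.div_rpow hy.le (by norm_num) _
        have h4 : (1:ℝ) ≤ 2 ^ (γ-1) * 2 := by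
          have : (2:ℝ) ^ (-(1:ℝ)) ≤ 2 ^ (γ - 1) :=
            Real.rpow_le_rpow_of_exponent_le one_le_two (by linarith)
          rw [Real.rpow_neg_one] at this
          nlinarith
        have h5 : 0 < (2:ℝ) ^ (γ-1) := Real.rpow_pos_of_pos two_pos _
        rw [h3, le_div_iff₀ h5] at h2
        nlinarith [Real.rpow_nonneg hx (γ-1), Real.rpow_nonneg hy.le (γ-1)]
      have hxle : x ^ γ ≤ x * y ^ (γ-1) * 2 := by
        have : x ^ γ = x * x ^ (γ-1) := by
          calc x ^ γ = x ^ (1 + (γ - 1)) := by ring_nf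
          _ = x ^ (1:ℝ) * x ^ (γ - 1) := Real.rpow_add hx0 1 (γ-1)
          _ = x * x ^ (γ - 1) := by rw [Real.rpow_one]
        rw [this]
        calc x * x ^ (γ-1) ≤ x * (2 * y ^ (γ-1)) := by
              exact mul_le_mul_of_nonneg_left hxm hx
        _ = x * y ^ (γ-1) * 2 := by ring
      -- y^γ - x^γ ≤ γ * ((y-x)/x) * x^γ = γ (y-x) x^{γ-1} ≤ 2γ(y-x) y^{γ-1}
      have key : y ^ γ - x ^ γ ≤ γ * (y - x) * x ^ (γ - 1) := by
        have h6 : (1 + γ*((y-x)/x)) * x ^ γ = x ^ γ + γ*(y-x)*(x ^ γ / x) := by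
          field_simp
        rw [hexp] at h6
        rw [h6] at hb2
        linarith
      calc y ^ γ - x ^ γ ≤ γ * (y - x) * x ^ (γ - 1) := key
      _ ≤ γ * (y - x) * (2 * y ^ (γ-1)) := by
          apply mul_le_mul_of_nonneg_left hxm
          exact mul_nonneg hγ.le (by linarith)
      _ = 2 * γ * (y - x) * y ^ (γ-1) := by ring
      _ ≤ (γ + 2) * (y - x) * y ^ (γ - 1) := by
          have : 0 ≤ (y - x) * y ^ (γ - 1) := mul_nonneg (by linarith) hyp
          nlinarith
  · -- x < y/2
    have hyx : y ≤ 2 * (y - x) := by linarith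
    have hxγ : 0 ≤ x ^ γ := Real.rpow_nonneg hx γ
    calc y ^ γ - x ^ γ ≤ y ^ γ := by linarith
    _ = y * y ^ (γ - 1) := hyγ
    _ ≤ 2 * (y - x) * y ^ (γ - 1) := mul_le_mul_of_nonneg_right hyx hyp
    _ ≤ (γ + 2) * (y - x) * y ^ (γ - 1) := by
        have : 0 ≤ (y - x) * y ^ (γ - 1) := mul_nonneg (by linarith) hyp
        nlinarith

/-- lower-bound constant. -/
def eKlow (γ : ℝ) : ℝ := min (min γ (1 - 2 ^ (-γ))) (1/2)

lemma eKlow_pos {γ : ℝ} (hγ : 0 < γ) : 0 < eKlow γ := by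
  have h1 : (2:ℝ) ^ (-γ) < 1 := Real.rpow_lt_one_of_one_lt_of_neg one_lt_two (by linarith)
  have : (0:ℝ) < 1/2 := by norm_num
  exact lt_min (lt_min hγ (by linarith)) this

lemma eKlow_le_half (γ : ℝ) : eKlow γ ≤ 1/2 := min_le_right _ _

lemma eKlow_le_one (γ : ℝ) : eKlow γ ≤ 1 := (eKlow_le_half γ).trans (by norm_num)

/-- lower bound, nonnegative case. -/
lemma low_nn {γ x y : ℝ} (hγ : 0 < γ) (hx : 0 ≤ x) (hxy : x ≤ y) :
    eKlow γ * (y - x) * y ^ (γ - 1) ≤ y ^ γ - x ^ γ := by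
  have hy : 0 ≤ y := hx.trans hxy
  have hkpos := eKlow_pos hγ
  rcases eq_or_lt_of_le hy with rfl | hy
  · have hx0 : x = 0 := le_antisymm hxy hx
    simp [hx0, Real.zero_rpow hγ.ne']
  have hyγ : y ^ γ = y * y ^ (γ - 1) := by
    calc y ^ γ = y ^ (1 + (γ - 1)) := by ring_nf
    _ = y ^ (1:ℝ) * y ^ (γ - 1) := Real.rpow_add hy 1 (γ-1)
    _ = y * y ^ (γ - 1) := by rw [Real.rpow_one]
  have hyp : 0 ≤ y ^ (γ - 1) := Real.rpow_nonneg hy.le _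
  have hyx : (y - x) * y ^ (γ-1) ≤ y * y ^ (γ-1) :=
    mul_le_mul_of_nonneg_right (by linarith) hyp
  rcases le_or_gt 1 γ with hγ1 | hγ1
  · -- γ ≥ 1 : x^γ ≤ x * y^(γ-1)
    have hxb : x ^ γ ≤ x * y ^ (γ - 1) := by
      rcases eq_or_lt_of_le hx with rfl | hx0
      · simp [Real.zero_rpow hγ.ne']
      have hxx : x ^ γ = x * x ^ (γ - 1) := by
        calc x ^ γ = x ^ (1 + (γ - 1)) := by ring_nf
        _ = x ^ (1:ℝ) * x ^ (γ - 1) := Real.rpow_add hx0 1 (γ-1)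
        _ = x * x ^ (γ - 1) := by rw [Real.rpow_one]
      rw [hxx]
      exact mul_le_mul_of_nonneg_left (Real.rpow_le_rpow hx hxy (by linarith)) hx
    have h1 : eKlow γ * (y - x) * y ^ (γ-1) ≤ 1 * (y - x) * y ^ (γ-1) := by
      apply mul_le_mul_of_nonneg_right _ hyp
      apply mul_le_mul_of_nonneg_right (eKlow_le_one γ) (by linarith)
    calc eKlow γ * (y - x) * y ^ (γ-1) ≤ 1 * (y - x) * y ^ (γ-1) := h1
    _ = y * y ^ (γ-1) - x * y ^ (γ-1) := by ring
    _ ≤ y ^ γ - x ^ γ := by rw [hyγ]; linarith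
  · rcases le_or_gt x (y/2) with hhalf | hhalf
    · -- x ≤ y/2 : y^γ - x^γ ≥ (1 - 2^{-γ}) y^γ
      have hxb : x ^ γ ≤ (y/2) ^ γ := Real.rpow_le_rpow hx hhalf hγ.le
      have h2 : (y/2) ^ γ = y ^ γ * 2 ^ (-γ) := by
        rw [Real.div_rpow hy.le (by norm_num : (0:ℝ) ≤ 2), Real.rpow_neg (by norm_num : (0:ℝ) ≤ 2)]
        ring
      have hk : eKlow γ ≤ 1 - 2 ^ (-γ) := (min_le_left _ _).trans (min_le_right _ _)
      have hyγpos : 0 < y ^ γ := Real.rpow_pos_of_pos hy γ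
      calc eKlow γ * (y - x) * y ^ (γ-1) ≤ (1 - 2^(-γ)) * (y * y ^ (γ-1)) := by
            have h0 : 0 ≤ (y - x) * y ^ (γ-1) := mul_nonneg (by linarith) hyp
            have := mul_le_mul_of_nonneg_right hyx (le_of_lt hkpos)
            nlinarith
      _ = y ^ γ - y ^ γ * 2 ^ (-γ) := by rw [← hyγ]; ring
      _ ≤ y ^ γ - x ^ γ := by rw [← h2]; linarith
    · -- y/2 < x : concave tangent at y from above: x^γ ≤ y^γ + γ y^{γ-1}(x-y)
      have hx0 : 0 < x := lt_of_le_of_lt (by linarith) hhalf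
      have hu : -1 ≤ (x - y)/y := by
        rw [le_div_iff₀ hy]; linarith
      have hb := rpow_one_add_le_one_add_mul_self hu hγ.le hγ1.le
      have h1u : (1 + (x-y)/y) = x / y := by field_simp; ring
      rw [h1u, Real.div_rpow hx0.le hy.le] at hb
      have hyγpos : 0 < y ^ γ := Real.rpow_pos_of_pos hy γ
      have hb2 : x ^ γ ≤ (1 + γ * ((x-y)/y)) * y ^ γ := by
        rw [← div_le_iff₀ hyγpos]; exact hb
      have hexp : y ^ γ / y = y ^ (γ - 1) := by
        rw [Real.rpow_sub hy, Real.rpow_one]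
      have h6 : (1 + γ*((x-y)/y)) * y ^ γ = y ^ γ - γ*(y-x)*(y ^ γ / y) := by
        field_simp; ring
      rw [hexp] at h6
      rw [h6] at hb2
      have hk : eKlow γ ≤ γ := (min_le_left _ _).trans (min_le_left _ _)
      have h0 : 0 ≤ (y - x) * y ^ (γ-1) := mul_nonneg (by linarith) hyp
      nlinarith
lemma eOp_sub_le_nn {γ x y : ℝ} (hγ : 0 < γ) (hx : 0 ≤ x) (hxy : x ≤ y) :
    eOp γ y - eOp γ x ≤ (γ + 4) * (y - x) * max |x| |y| ^ (γ - 1) := by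
  have hy : 0 ≤ y := hx.trans hxy
  have hM : max |x| |y| = y := by
    rw [abs_of_nonneg hx, abs_of_nonneg hy, max_eq_right hxy]
  rw [hM, eOp_of_nonneg hγ hx, eOp_of_nonneg hγ hy]
  have := up_nn hγ hx hxy
  have h0 : 0 ≤ (y - x) * y ^ (γ-1) := mul_nonneg (by linarith) (Real.rpow_nonneg hy _)
  nlinarith

lemma eOp_sub_ge_nn {γ x y : ℝ} (hγ : 0 < γ) (hx : 0 ≤ x) (hxy : x ≤ y) :
    eKlow γ * (y - x) * max |x| |y| ^ (γ - 1) ≤ eOp γ y - eOp γ x := by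
  have hy : 0 ≤ y := hx.trans hxy
  have hM : max |x| |y| = y := by
    rw [abs_of_nonneg hx, abs_of_nonneg hy, max_eq_right hxy]
  rw [hM, eOp_of_nonneg hγ hx, eOp_of_nonneg hγ hy]
  exact low_nn hγ hx hxy

lemma eOp_sub_le {γ x y : ℝ} (hγ : 0 < γ) (hxy : x ≤ y) :
    eOp γ y - eOp γ x ≤ (γ + 4) * (y - x) * max |x| |y| ^ (γ - 1) := by
  rcases le_or_gt 0 x with hx | hx
  · exact eOp_sub_le_nn hγ hx hxy
  · rcases le_or_gt y 0 with hy | hy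
    · -- x ≤ y ≤ 0
      have hM : max |x| |y| = -x := by
        rw [abs_of_nonpos hy, abs_of_nonpos (le_of_lt hx)]
        exact max_eq_left (by linarith)
      have h1 : (0:ℝ) ≤ -y := by linarith
      have h2 : -y ≤ -x := by linarith
      have hM2 : max |(-y)| |(-x)| = -x := by
        rw [abs_of_nonneg h1, abs_of_nonneg (h1.trans h2), max_eq_right h2]
      have := eOp_sub_le_nn (x := -y) (y := -x) hγ h1 h2
      rw [hM2, eOp_neg, eOp_neg] at this
      rw [hM]
      have he : -x - -y = y - x := by ring
      rw [he] at this
      linarith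
    · -- x < 0 < y
      have hyM : y ≤ max |x| |y| := (le_abs_self y).trans (le_max_right _ _)
      have hxM : -x ≤ max |x| |y| := (neg_le_abs x).trans (le_max_left _ _)
      have hM : 0 < max |x| |y| := lt_of_lt_of_le hy hyM
      have hay : |y| = y := abs_of_pos hy
      have hax : |x| = -x := abs_of_neg hx
      have hopy : eOp γ y = y ^ γ := eOp_of_nonneg hγ hy.le
      have hopx : eOp γ x = -((-x) ^ γ) := by
        have := eOp_neg γ (-x)
        rw [neg_neg] at this
        rw [this, eOp_of_nonneg hγ (by linarith : (0:ℝ) ≤ -x)]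
      have hMγ : max |x| |y| ^ γ = max |x| |y| * max |x| |y| ^ (γ - 1) := by
        calc max |x| |y| ^ γ = max |x| |y| ^ (1 + (γ - 1)) := by ring_nf
        _ = _ := by rw [Real.rpow_add hM, Real.rpow_one]
      have hy' : y ^ γ ≤ max |x| |y| ^ γ := Real.rpow_le_rpow hy.le hyM hγ.le
      have hx' : (-x) ^ γ ≤ max |x| |y| ^ γ := Real.rpow_le_rpow (by linarith) hxM hγ.le
      have hMd : max |x| |y| ≤ y - x := by
        apply max_le
        · rw [hax]; linarith
        · rw [hay]; linarith
      have hp : 0 ≤ max |x| |y| ^ (γ-1) := Real.rpow_nonneg hM.le _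
      rw [hopy, hopx]
      calc y ^ γ - -((-x) ^ γ) ≤ 2 * max |x| |y| ^ γ := by linarith
      _ = 2 * max |x| |y| * max |x| |y| ^ (γ-1) := by rw [hMγ]; ring
      _ ≤ 2 * (y - x) * max |x| |y| ^ (γ-1) := by
          apply mul_le_mul_of_nonneg_right _ hp
          linarith
      _ ≤ (γ + 4) * (y - x) * max |x| |y| ^ (γ - 1) := by
          have h0 : 0 ≤ (y - x) * max |x| |y| ^ (γ-1) := mul_nonneg (by linarith) hp
          nlinarith

lemma eOp_sub_ge {γ x y : ℝ} (hγ : 0 < γ) (hxy : x ≤ y) :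
    eKlow γ * (y - x) * max |x| |y| ^ (γ - 1) ≤ eOp γ y - eOp γ x := by
  have hkpos := eKlow_pos hγ
  rcases le_or_gt 0 x with hx | hx
  · exact eOp_sub_ge_nn hγ hx hxy
  · rcases le_or_gt y 0 with hy | hy
    · have hM : max |x| |y| = -x := by
        rw [abs_of_nonpos hy, abs_of_nonpos (le_of_lt hx)]
        exact max_eq_left (by linarith)
      have h1 : (0:ℝ) ≤ -y := by linarith
      have h2 : -y ≤ -x := by linarith
      have hM2 : max |(-y)| |(-x)| = -x := by
        rw [abs_of_nonneg h1, abs_of_nonneg (h1.trans h2), max_eq_right h2]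
      have := eOp_sub_ge_nn (x := -y) (y := -x) hγ h1 h2
      rw [hM2, eOp_neg, eOp_neg] at this
      rw [hM]
      have he : -x - -y = y - x := by ring
      rw [he] at this
      linarith
    · -- x < 0 < y
      have hyM : y ≤ max |x| |y| := (le_abs_self y).trans (le_max_right _ _)
      have hxM : -x ≤ max |x| |y| := (neg_le_abs x).trans (le_max_left _ _)
      have hM : 0 < max |x| |y| := lt_of_lt_of_le hy hyM
      have hay : |y| = y := abs_of_pos hy
      have hax : |x| = -x := abs_of_neg hx
      have hopy : eOp γ y = y ^ γ := eOp_of_nonneg hγ hy.le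
      have hopx : eOp γ x = -((-x) ^ γ) := by
        have := eOp_neg γ (-x)
        rw [neg_neg] at this
        rw [this, eOp_of_nonneg hγ (by linarith : (0:ℝ) ≤ -x)]
      have hMγ : max |x| |y| ^ γ = max |x| |y| * max |x| |y| ^ (γ - 1) := by
        calc max |x| |y| ^ γ = max |x| |y| ^ (1 + (γ - 1)) := by ring_nf
        _ = _ := by rw [Real.rpow_add hM, Real.rpow_one]
      have hp : 0 ≤ max |x| |y| ^ (γ-1) := Real.rpow_nonneg hM.le _
      -- M^γ ≤ y^γ + (-x)^γ
      have hyn : (0:ℝ) ≤ y ^ γ := Real.rpow_nonneg hy.le _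
      have hxn : (0:ℝ) ≤ (-x) ^ γ := Real.rpow_nonneg (by linarith) _
      have hMle : max |x| |y| ^ γ ≤ y ^ γ + (-x) ^ γ := by
        rcases max_cases |x| |y| with ⟨hmeq, _⟩ | ⟨hmeq, _⟩
        · rw [hmeq, hax]; linarith
        · rw [hmeq, hay]; linarith
      -- y - x ≤ 2 M
      have hd : y - x ≤ 2 * max |x| |y| := by linarith
      rw [hopy, hopx]
      have hk : eKlow γ ≤ 1/2 := eKlow_le_half γ
      calc eKlow γ * (y - x) * max |x| |y| ^ (γ-1)
          ≤ (1/2) * (2 * max |x| |y|) * max |x| |y| ^ (γ-1) := by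
            have h0 : 0 ≤ y - x := by linarith
            apply mul_le_mul_of_nonneg_right _ hp
            nlinarith
      _ = max |x| |y| ^ γ := by rw [hMγ]; ring
      _ ≤ y ^ γ - -((-x) ^ γ) := by linarith

lemma eOp_mono {γ : ℝ} (hγ : 0 < γ) : Monotone (eOp γ) := by
  intro x y hxy
  have h := eOp_sub_ge hγ hxy
  have hkpos := eKlow_pos hγ
  have hp : 0 ≤ max |x| |y| ^ (γ-1) := Real.rpow_nonneg (le_max_of_le_left (abs_nonneg x)) _
  have h0 : 0 ≤ eKlow γ * (y - x) * max |x| |y| ^ (γ-1) :=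
    mul_nonneg (mul_nonneg hkpos.le (by linarith)) hp
  linarith

section Hfun

variable {s : ℝ}

lemma hder_eq_eOp (s z : ℝ) : hder s z = s / (1 - s) * eOp (1/s - 1) z := by
  have h : (1/s - 1 - 1 : ℝ) = 1/s - 2 := by ring
  rw [hder, eOp, h, mul_assoc]

lemma one_lt_inv_s (hs0 : 0 < s) (hs1 : s < 1) : 1 < 1/s := (one_lt_div hs0).2 hs1

lemma kappa_pos (hs0 : 0 < s) (hs1 : s < 1) : 0 < s / (1 - s) := div_pos hs0 (by linarith)

lemma hder_mono (hs0 : 0 < s) (hs1 : s < 1) : Monotone (hder s) := by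
  intro x y hxy
  rw [hder_eq_eOp, hder_eq_eOp]
  have hγ : 0 < 1/s - 1 := by have := one_lt_inv_s hs0 hs1; linarith
  exact mul_le_mul_of_nonneg_left (eOp_mono hγ hxy) (kappa_pos hs0 hs1).le

lemma hasDerivAt_hfun (hs0 : 0 < s) (hs1 : s < 1) (z : ℝ) :
    HasDerivAt (hfun s) (hder s z) z := by
  have hα := one_lt_inv_s hs0 hs1
  have hc : (0:ℝ) < s^2/(1-s) := div_pos (by positivity) (by linarith)
  rcases lt_trichotomy z 0 with hz | rfl | hz
  · -- z < 0
    have hd : HasDerivAt (fun x : ℝ => s^2/(1-s) * (-x) ^ (1/s))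
        (s^2/(1-s) * ((1/s) * (-z) ^ (1/s - 1) * (-1))) z := by
      have h1 : HasDerivAt (fun u : ℝ => u ^ (1/s)) ((1/s) * (-z) ^ (1/s - 1)) (-z) :=
        Real.hasDerivAt_rpow_const (Or.inl (by linarith))
      have h2 : HasDerivAt (fun x : ℝ => -x) (-1) z := (hasDerivAt_id z).neg
      exact ((h1.comp z h2)).const_mul _
    have heq : hfun s =ᶠ[nhds z] fun x => s^2/(1-s) * (-x) ^ (1/s) := by
      filter_upwards [Iio_mem_nhds hz] with x hx
      rw [hfun, abs_of_neg hx]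
    have := hd.congr_of_eventuallyEq heq
    refine this.congr_deriv (Eq.symm ?_)
    rw [hder, abs_of_neg hz]
    have hnz : (0:ℝ) < -z := by linarith
    have h3 : (-z) ^ (1/s - 1) = (-z) * (-z) ^ (1/s - 2) := by
      calc (-z) ^ (1/s-1) = (-z) ^ (1 + (1/s - 2)) := by ring_nf
      _ = (-z) ^ (1:ℝ) * (-z) ^ (1/s-2) := Real.rpow_add hnz 1 (1/s-2)
      _ = (-z) * (-z) ^ (1/s-2) := by rw [Real.rpow_one]
    have hs' : s ≠ 0 := hs0.ne'
    have h1s : (1:ℝ) - s ≠ 0 := ne_of_gt (by linarith)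
    have hcs : s^2/(1-s) * (1/s) = s/(1-s) := by field_simp
    rw [h3]
    calc s/(1-s) * z * (-z) ^ (1/s-2)
        = (s^2/(1-s) * (1/s)) * z * (-z) ^ (1/s-2) := by rw [hcs]
    _ = s^2/(1-s) * (1/s * (-z * (-z) ^ (1/s-2)) * -1) := by ring
  · -- z = 0
    have h0 : hder s 0 = 0 := by simp [hder]
    rw [h0]
    rw [hasDerivAt_iff_tendsto_slope]
    have hβ : 0 < 1/s - 1 := by linarith
    have hf0 : hfun s 0 = 0 := by
      rw [hfun, abs_zero, Real.zero_rpow (one_div_pos.mpr hs0).ne', mul_zero]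
    apply squeeze_zero_norm' (a := fun x : ℝ => s^2/(1-s) * |x| ^ (1/s - 1))
    · filter_upwards [self_mem_nhdsWithin] with x hx
      have hx0 : x ≠ 0 := hx
      have hax : 0 < |x| := abs_pos.2 hx0
      rw [slope_def_field, hf0, sub_zero, sub_zero, hfun, div_eq_mul_inv]
      have h2 : |x| ^ (1/s) = |x| * |x| ^ (1/s - 1) := by
        calc |x| ^ (1/s) = |x| ^ (1 + (1/s - 1)) := by ring_nf
        _ = |x| ^ (1:ℝ) * |x| ^ (1/s-1) := Real.rpow_add hax 1 (1/s-1)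
        _ = |x| * |x| ^ (1/s-1) := by rw [Real.rpow_one]
      have hrp : 0 ≤ |x| ^ ((1:ℝ)/s) := Real.rpow_nonneg (abs_nonneg x) _
      calc ‖s^2/(1-s) * |x| ^ (1/s) * x⁻¹‖
          = s^2/(1-s) * |x| ^ (1/s) * |x|⁻¹ := by
            rw [Real.norm_eq_abs, abs_mul, abs_mul, abs_inv,
              abs_of_pos hc, abs_of_nonneg hrp]
      _ = s^2/(1-s) * |x| ^ (1/s-1) * (|x| * |x|⁻¹) := by rw [h2]; ring
      _ = s^2/(1-s) * |x| ^ (1/s-1) := by rw [mul_inv_cancel₀ hax.ne', mul_one]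
      _ ≤ s^2/(1-s) * |x| ^ (1/s-1) := le_refl _
    · have hcont : ContinuousAt (fun x : ℝ => s^2/(1-s) * |x| ^ (1/s - 1)) 0 := by
        apply ContinuousAt.mul continuousAt_const
        exact (Real.continuousAt_rpow_const _ _ (Or.inr hβ.le)).comp
          continuous_abs.continuousAt
      have h0' : s^2/(1-s) * |(0:ℝ)| ^ (1/s - 1) = 0 := by
        rw [abs_zero, Real.zero_rpow hβ.ne', mul_zero]
      have htd := hcont.tendsto
      rw [h0'] at htd
      exact htd.mono_left nhdsWithin_le_nhds
  · -- z > 0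
    have hd : HasDerivAt (fun x : ℝ => s^2/(1-s) * x ^ (1/s))
        (s^2/(1-s) * ((1/s) * z ^ (1/s - 1))) z := by
      exact (Real.hasDerivAt_rpow_const (Or.inl hz.ne')).const_mul _
    have heq : hfun s =ᶠ[nhds z] fun x => s^2/(1-s) * x ^ (1/s) := by
      filter_upwards [Ioi_mem_nhds hz] with x hx
      rw [hfun, abs_of_pos hx]
    have := hd.congr_of_eventuallyEq heq
    refine this.congr_deriv (Eq.symm ?_)
    rw [hder, abs_of_pos hz]
    have h3 : z ^ (1/s - 1) = z * z ^ (1/s - 2) := by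
      calc z ^ (1/s-1) = z ^ (1 + (1/s - 2)) := by ring_nf
      _ = z ^ (1:ℝ) * z ^ (1/s-2) := Real.rpow_add hz 1 (1/s-2)
      _ = z * z ^ (1/s-2) := by rw [Real.rpow_one]
    have hs' : s ≠ 0 := hs0.ne'
    have h1s : (1:ℝ) - s ≠ 0 := ne_of_gt (by linarith)
    have hcs : s^2/(1-s) * (1/s) = s/(1-s) := by field_simp
    rw [h3]
    calc s/(1-s) * z * z ^ (1/s-2)
        = (s^2/(1-s) * (1/s)) * z * z ^ (1/s-2) := by rw [hcs]
    _ = s^2/(1-s) * (1/s * (z * z ^ (1/s-2))) := by ring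

lemma deltaH_nonneg (hs0 : 0 < s) (hs1 : s < 1) (a b : ℝ) : 0 ≤ deltaH s a b := by
  have hD : ∀ z, HasDerivAt (hfun s) (hder s z) z := hasDerivAt_hfun hs0 hs1
  have hdiff : Differentiable ℝ (hfun s) := fun z => (hD z).differentiableAt
  have hcont : Continuous (hfun s) := hdiff.continuous
  have hmono := hder_mono hs0 hs1
  rcases lt_trichotomy a b with hab | rfl | hab
  · obtain ⟨ξ, hξ, hslope⟩ := exists_hasDerivAt_eq_slope (hfun s) (hder s) hab
      (hcont.continuousOn) (fun x _ => hD x)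
    have h1 : hfun s b - hfun s a = hder s ξ * (b - a) := by
      rw [hslope, div_mul_cancel₀ _ (sub_ne_zero.2 hab.ne')]
    have h2 : hder s a ≤ hder s ξ := hmono hξ.1.le
    rw [deltaH, h1]
    have : 0 ≤ (hder s ξ - hder s a) * (b - a) :=
      mul_nonneg (by linarith) (by linarith)
    linarith
  · simp [deltaH]
  · obtain ⟨ξ, hξ, hslope⟩ := exists_hasDerivAt_eq_slope (hfun s) (hder s) hab
      (hcont.continuousOn) (fun x _ => hD x)
    have h1 : hfun s a - hfun s b = hder s ξ * (a - b) := by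
      rw [hslope, div_mul_cancel₀ _ (sub_ne_zero.2 hab.ne')]
    have h2 : hder s ξ ≤ hder s a := hmono hξ.2.le
    rw [deltaH]
    have : 0 ≤ (hder s a - hder s ξ) * (a - b) :=
      mul_nonneg (by linarith) (by linarith)
    nlinarith [h1]
lemma deltaH_split (s a b c : ℝ) :
    deltaH s a b = deltaH s a c + deltaH s c b + (hder s c - hder s a) * (b - c) := by
  unfold deltaH; ring

lemma min_rpow_le {m M' p : ℝ} (hm : 0 < m) (h1 : m/3 ≤ M') (h2 : M' ≤ m) :
    min 1 ((3:ℝ) ^ (-p)) * m ^ p ≤ M' ^ p := by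
  have hM' : 0 < M' := lt_of_lt_of_le (by linarith) h1
  rcases le_or_gt 0 p with hp | hp
  · have e1 : (m/3) ^ p = m ^ p * 3 ^ (-p) := by
      rw [Real.div_rpow hm.le (by norm_num : (0:ℝ) ≤ 3), Real.rpow_neg (by norm_num : (0:ℝ) ≤ 3),
        div_eq_mul_inv]
    have e2 : (m/3) ^ p ≤ M' ^ p := Real.rpow_le_rpow (by positivity) h1 hp
    have e3 : min 1 ((3:ℝ)^(-p)) * m ^ p ≤ 3 ^ (-p) * m ^ p :=
      mul_le_mul_of_nonneg_right (min_le_right _ _) (Real.rpow_nonneg hm.le _)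
    calc min 1 ((3:ℝ)^(-p)) * m ^ p ≤ 3 ^ (-p) * m ^ p := e3
    _ = (m/3) ^ p := by rw [e1]; ring
    _ ≤ M' ^ p := e2
  · have e2 : m ^ p ≤ M' ^ p := Real.rpow_le_rpow_of_nonpos hM' h2 hp.le
    calc min 1 ((3:ℝ)^(-p)) * m ^ p ≤ 1 * m ^ p :=
        mul_le_mul_of_nonneg_right (min_le_left _ _) (Real.rpow_nonneg hm.le _)
    _ = m ^ p := one_mul _
    _ ≤ M' ^ p := e2

/-- lower-bound constant for `deltaH`. -/
def eKd (s : ℝ) : ℝ := s/(1-s) * eKlow (1/s - 1) * min 1 ((3:ℝ) ^ (2 - 1/s)) / 4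

lemma eKd_pos {s : ℝ} (hs0 : 0 < s) (hs1 : s < 1) : 0 < eKd s := by
  have hγ : 0 < 1/s - 1 := by have := one_lt_inv_s hs0 hs1; linarith
  have h1 := kappa_pos hs0 hs1
  have h2 := eKlow_pos hγ
  have h3 : 0 < min 1 ((3:ℝ) ^ (2 - 1/s)) :=
    lt_min one_pos (Real.rpow_pos_of_pos (by norm_num) _)
  have : 0 < s/(1-s) * eKlow (1/s-1) * min 1 ((3:ℝ) ^ (2 - 1/s)) := by positivity
  exact div_pos this (by norm_num)

lemma deltaH_ge (hs0 : 0 < s) (hs1 : s < 1) (a b : ℝ) :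
    eKd s * (b - a)^2 * (max |a| |b|) ^ (1/s - 2) ≤ deltaH s a b := by
  have hγ : 0 < 1/s - 1 := by have := one_lt_inv_s hs0 hs1; linarith
  have hκ := kappa_pos hs0 hs1
  have hkl := eKlow_pos hγ
  by_cases hab : a = b
  · subst hab
    have h1 : eKd s * (a - a)^2 * (max |a| |a|) ^ (1/s - 2) = 0 := by ring_nf
    rw [h1]
    exact deltaH_nonneg hs0 hs1 a a
  -- m > 0
  have hm : 0 < max |a| |b| := by
    rcases lt_or_eq_of_le (le_max_left |a| |b|) with h | h
    · exact lt_of_le_of_lt (abs_nonneg a) h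
    · rcases eq_or_lt_of_le (abs_nonneg a) with h2 | h2
      · -- |a| = 0
        have hb : b ≠ 0 := by
          intro hb0
          apply hab
          rw [hb0, ← abs_eq_zero, ← h2]
        exact lt_of_lt_of_le (abs_pos.2 hb) (le_max_right _ _)
      · exact lt_of_lt_of_le h2 (le_max_left _ _)
  set m := max |a| |b| with hmdef
  set mid := (a+b)/2 with hmiddef
  set M' := max |a| |mid| with hM'def
  have hM'2 : M' ≤ m := by
    apply max_le (le_max_left _ _)
    have h1 : |mid| ≤ (|a| + |b|)/2 := by
      rw [hmiddef]
      calc |(a+b)/2| = |a+b|/2 := by rw [abs_div]; norm_num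
      _ ≤ (|a| + |b|)/2 := by have := abs_add_le a b; linarith
    have h2 : |a| ≤ m := le_max_left _ _
    have h3 : |b| ≤ m := le_max_right _ _
    linarith
  have hM'1 : m/3 ≤ M' := by
    rcases le_or_gt (m/3) |a| with h | h
    · exact h.trans (le_max_left _ _)
    · have hbm : m = |b| := by
        rcases max_cases |a| |b| with ⟨h1, _⟩ | ⟨h1, _⟩
        · exfalso; rw [hmdef] at *; nlinarith
        · exact h1
      have h2 : |b| - |a| ≤ |a + b| := by
        have h := abs_sub_abs_le_abs_sub b (-a)
        rw [abs_neg] at h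
        have he : |b - -a| = |a + b| := by rw [sub_neg_eq_add, add_comm]
        rwa [he] at h
      have h3 : |mid| = |a+b|/2 := by
        rw [hmiddef, abs_div]; norm_num
      have : m/3 ≤ |mid| := by
        rw [h3]; rw [hbm] at h ⊢
        linarith
      exact this.trans (le_max_right _ _)
  have hM'p : min 1 ((3:ℝ) ^ (2 - 1/s)) * m ^ (1/s - 2) ≤ M' ^ (1/s - 2) := by
    have := min_rpow_le (p := 1/s - 2) hm hM'1 hM'2
    have he : -(1/s - 2) = 2 - 1/s := by ring
    rw [he] at this
    exact this
  have hsplit := deltaH_split s a b mid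
  have hd1 := deltaH_nonneg hs0 hs1 a mid
  have hd2 := deltaH_nonneg hs0 hs1 mid b
  have hmain : eKlow (1/s-1) * ((b-a)/2) * ((b-a)/2) * (s/(1-s)) * M' ^ (1/s - 2)
      ≤ (hder s mid - hder s a) * (b - mid) := by
    have hexp : (1/s - 1 - 1 : ℝ) = 1/s - 2 := by ring
    rcases lt_or_gt_of_ne hab with hlt | hgt
    · -- a < b, a < mid
      have h1 : a ≤ mid := by rw [hmiddef]; linarith
      have h2 := eOp_sub_ge hγ h1
      rw [hexp] at h2
      have h3 : hder s mid - hder s a = s/(1-s) * (eOp (1/s-1) mid - eOp (1/s-1) a) := by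
        rw [hder_eq_eOp, hder_eq_eOp]; ring
      have h4 : mid - a = (b-a)/2 := by rw [hmiddef]; ring
      have h5 : b - mid = (b-a)/2 := by rw [hmiddef]; ring
      rw [h3, h5]
      have h6 : 0 ≤ (b-a)/2 := by linarith
      calc eKlow (1/s-1) * ((b-a)/2) * ((b-a)/2) * (s/(1-s)) * M' ^ (1/s-2)
          = (s/(1-s)) * (eKlow (1/s-1) * ((b-a)/2) * M' ^ (1/s-2)) * ((b-a)/2) := by ring
      _ ≤ (s/(1-s)) * (eOp (1/s-1) mid - eOp (1/s-1) a) * ((b-a)/2) := by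
          apply mul_le_mul_of_nonneg_right _ h6
          apply mul_le_mul_of_nonneg_left _ hκ.le
          rw [← h4]
          exact h2
      _ = s/(1-s) * (eOp (1/s-1) mid - eOp (1/s-1) a) * ((b-a)/2) := by ring
    · -- b < a, mid < a
      have h1 : mid ≤ a := by rw [hmiddef]; linarith
      have h2 := eOp_sub_ge hγ h1
      rw [hexp] at h2
      have hmx : max |mid| |a| = M' := max_comm _ _
      rw [hmx] at h2
      have h3 : hder s mid - hder s a = -(s/(1-s) * (eOp (1/s-1) a - eOp (1/s-1) mid)) := by
        rw [hder_eq_eOp, hder_eq_eOp]; ring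
      have h4 : a - mid = (a-b)/2 := by rw [hmiddef]; ring
      have h5 : b - mid = -((a-b)/2) := by rw [hmiddef]; ring
      rw [h3, h5]
      have h6 : 0 ≤ (a-b)/2 := by linarith
      have h7 : (-(s/(1-s) * (eOp (1/s-1) a - eOp (1/s-1) mid))) * (-((a-b)/2))
          = s/(1-s) * (eOp (1/s-1) a - eOp (1/s-1) mid) * ((a-b)/2) := by ring
      rw [h7]
      calc eKlow (1/s-1) * ((b-a)/2) * ((b-a)/2) * (s/(1-s)) * M' ^ (1/s-2)
          = (s/(1-s)) * (eKlow (1/s-1) * ((a-b)/2) * M' ^ (1/s-2)) * ((a-b)/2) := by ring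
      _ ≤ (s/(1-s)) * (eOp (1/s-1) a - eOp (1/s-1) mid) * ((a-b)/2) := by
          apply mul_le_mul_of_nonneg_right _ h6
          apply mul_le_mul_of_nonneg_left _ hκ.le
          rw [← h4]
          exact h2
  -- combine
  have hMp : 0 ≤ M' ^ (1/s - 2) := Real.rpow_nonneg (le_trans (by positivity) hM'1) _
  have hstep : eKd s * (b-a)^2 * m ^ (1/s-2) ≤
      eKlow (1/s-1) * ((b-a)/2) * ((b-a)/2) * (s/(1-s)) * M' ^ (1/s - 2) := by
    have h8 : eKd s * (b-a)^2 * m ^ (1/s-2)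
        = (eKlow (1/s-1) * ((b-a)/2) * ((b-a)/2) * (s/(1-s))) * (min 1 ((3:ℝ)^(2-1/s)) * m ^ (1/s-2)) := by
      rw [eKd]; ring
    rw [h8]
    apply mul_le_mul_of_nonneg_left hM'p
    have h9 : 0 ≤ (eKlow (1/s-1) * (s/(1-s))) * (((b-a)/2) * ((b-a)/2)) :=
      mul_nonneg (mul_nonneg hkl.le hκ.le) (mul_self_nonneg _)
    exact le_of_le_of_eq h9 (by ring)
  calc eKd s * (b-a)^2 * m ^ (1/s-2)
      ≤ eKlow (1/s-1) * ((b-a)/2) * ((b-a)/2) * (s/(1-s)) * M' ^ (1/s - 2) := hstep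
  _ ≤ (hder s mid - hder s a) * (b - mid) := hmain
  _ ≤ deltaH s a b := by rw [hsplit]; linarith

lemma hder_diff_le (hs0 : 0 < s) (hs1 : s < 1) (a b : ℝ) :
    |hder s b - hder s a| ≤ s/(1-s) * (1/s - 1 + 4) * |b - a| * (max |a| |b|) ^ (1/s - 2) := by
  have hγ : 0 < 1/s - 1 := by have := one_lt_inv_s hs0 hs1; linarith
  have hκ := kappa_pos hs0 hs1
  have hexp : (1/s - 1 - 1 : ℝ) = 1/s - 2 := by ring
  rcases le_total a b with hab | hab
  · have hmono := hder_mono hs0 hs1 hab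
    rw [abs_of_nonneg (sub_nonneg.2 hmono), abs_of_nonneg (sub_nonneg.2 hab)]
    have h2 := eOp_sub_le hγ hab
    rw [hexp] at h2
    have h3 : hder s b - hder s a = s/(1-s) * (eOp (1/s-1) b - eOp (1/s-1) a) := by
      rw [hder_eq_eOp, hder_eq_eOp]; ring
    rw [h3]
    calc s/(1-s) * (eOp (1/s-1) b - eOp (1/s-1) a)
        ≤ s/(1-s) * ((1/s - 1 + 4) * (b - a) * max |a| |b| ^ (1/s-2)) :=
          mul_le_mul_of_nonneg_left h2 hκ.le
    _ = s/(1-s) * (1/s - 1 + 4) * (b - a) * max |a| |b| ^ (1/s-2) := by ring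
  · have hmono := hder_mono hs0 hs1 hab
    rw [abs_sub_comm, abs_of_nonneg (sub_nonneg.2 hmono), abs_sub_comm b a,
      abs_of_nonneg (sub_nonneg.2 hab)]
    have h2 := eOp_sub_le hγ hab
    rw [hexp] at h2
    have hmx : max |b| |a| = max |a| |b| := max_comm _ _
    rw [hmx] at h2
    have h3 : hder s a - hder s b = s/(1-s) * (eOp (1/s-1) a - eOp (1/s-1) b) := by
      rw [hder_eq_eOp, hder_eq_eOp]; ring
    rw [h3]
    calc s/(1-s) * (eOp (1/s-1) a - eOp (1/s-1) b)
        ≤ s/(1-s) * ((1/s - 1 + 4) * (a - b) * max |a| |b| ^ (1/s-2)) :=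
          mul_le_mul_of_nonneg_left h2 hκ.le
    _ = s/(1-s) * (1/s - 1 + 4) * (a - b) * max |a| |b| ^ (1/s-2) := by ring

end Hfun

section Helpers

lemma rpow_two' (x : ℝ) : x ^ (2:ℝ) = x ^ 2 := by
  rw [show (2:ℝ) = ((2:ℕ):ℝ) by norm_num, Real.rpow_natCast]

lemma sq_mul_rpow {d : ℝ} (hd : 0 < d) (pp : ℝ) : d^2 * d^pp = d^(2+pp) := by
  rw [← rpow_two' d, ← Real.rpow_add hd]

lemma mul_self_rpow {d : ℝ} (hd : 0 < d) (pp : ℝ) : d * d^pp = d^(1+pp) := by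
  nth_rewrite 1 [← Real.rpow_one d]
  rw [← Real.rpow_add hd]

lemma le_rpow_inv_of_rpow_le {x y pp : ℝ} (hx : 0 ≤ x) (hp : 0 < pp) (h : x ^ pp ≤ y) :
    x ≤ y ^ (1/pp) := by
  have h2 := Real.rpow_le_rpow (Real.rpow_nonneg hx pp) h (le_of_lt (one_div_pos.2 hp))
  rwa [← Real.rpow_mul hx, mul_one_div_cancel hp.ne', Real.rpow_one] at h2

lemma le_sqrt_of_sq_le {x y : ℝ} (hx : 0 ≤ x) (h : x ^ 2 ≤ y) : x ≤ y ^ ((1:ℝ)/2) := by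
  apply le_rpow_inv_of_rpow_le hx two_pos
  rwa [rpow_two']

lemma sq_rpow_half {x : ℝ} (hx : 0 ≤ x) : (x ^ 2) ^ ((1:ℝ)/2) = x := by
  rw [← rpow_two' x, ← Real.rpow_mul hx]
  norm_num

end Helpers

/-- the constant in the cross-term bound. -/
def eCA (s : ℝ) : ℝ := s/(1-s) * (1/s - 1 + 4)

/-- the engulfing constant. -/
def eCB (s : ℝ) : ℝ := eCA s / eKd s *
  ((3:ℝ) ^ ((1/s-2)/2) + (3:ℝ) ^ ((2-1/s)/2) + (3:ℝ) ^ (1/s-2) + (3:ℝ) ^ (2-1/s))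

lemma eCA_pos {s : ℝ} (hs0 : 0 < s) (hs1 : s < 1) : 0 < eCA s := by
  have hγ : 0 < 1/s - 1 := by have := one_lt_inv_s hs0 hs1; linarith
  have := kappa_pos hs0 hs1
  have : 0 < (1/s - 1 + 4 : ℝ) := by linarith
  exact mul_pos (kappa_pos hs0 hs1) this

lemma eCB_pos {s : ℝ} (hs0 : 0 < s) (hs1 : s < 1) : 0 < eCB s := by
  have h1 := eCA_pos hs0 hs1
  have h2 := eKd_pos hs0 hs1
  have h3 : (0:ℝ) < (3:ℝ) ^ ((1/s-2)/2) := Real.rpow_pos_of_pos (by norm_num) _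
  have h4 : (0:ℝ) < (3:ℝ) ^ ((2-1/s)/2) := Real.rpow_pos_of_pos (by norm_num) _
  have h5 : (0:ℝ) < (3:ℝ) ^ (1/s-2) := Real.rpow_pos_of_pos (by norm_num) _
  have h6 : (0:ℝ) < (3:ℝ) ^ (2-1/s) := Real.rpow_pos_of_pos (by norm_num) _
  exact mul_pos (div_pos h1 h2) (by linarith)

section Branches

lemma cross_sqrt_bound {d₀ d₁ m₀ m₁ c ε t K p : ℝ}
    (hd₀ : 0 < d₀) (hd₁ : 0 < d₁) (hm₀ : 0 < m₀) (hm₁ : 0 < m₁) (hc : 0 ≤ c)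
    (hK : 0 < K) (ht : 0 < t) (hε : 0 < ε)
    (hcmp : m₀ ^ (p/2) ≤ c * m₁ ^ (p/2))
    (hQ₀ : d₀^2 * m₀ ^ p ≤ t / K) (hQ₁ : d₁^2 * m₁ ^ p ≤ (ε*t) / K) :
    d₀ * m₀ ^ p * d₁ ≤ c * (ε ^ ((1:ℝ)/2) * (t / K)) := by
  have hTK : 0 < t / K := div_pos ht hK
  have hsp : ∀ m : ℝ, 0 < m → (m ^ (p/2))^2 = m ^ p := fun m hm => by
    rw [sq, ← Real.rpow_add hm]; ring_nf
  have hu₀ : d₀ * m₀^(p/2) ≤ (t/K) ^ ((1:ℝ)/2) := by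
    apply le_sqrt_of_sq_le (by positivity)
    rw [mul_pow, hsp m₀ hm₀]; exact hQ₀
  have hu₁ : d₁ * m₁^(p/2) ≤ ((ε*t)/K) ^ ((1:ℝ)/2) := by
    apply le_sqrt_of_sq_le (by positivity)
    rw [mul_pow, hsp m₁ hm₁]; exact hQ₁
  have key : d₀ * m₀^p * d₁ ≤ c * ((d₀ * m₀^(p/2)) * (d₁ * m₁^(p/2))) := by
    have h1 : m₀^p = m₀^(p/2) * m₀^(p/2) := by rw [← Real.rpow_add hm₀]; ring_nf
    rw [h1]
    calc d₀ * (m₀^(p/2) * m₀^(p/2)) * d₁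
        = (d₀ * m₀^(p/2) * d₁) * m₀^(p/2) := by ring
    _ ≤ (d₀ * m₀^(p/2) * d₁) * (c * m₁^(p/2)) := by
        apply mul_le_mul_of_nonneg_left hcmp
        positivity
    _ = c * ((d₀ * m₀^(p/2)) * (d₁ * m₁^(p/2))) := by ring
  have hprod : (d₀ * m₀^(p/2)) * (d₁ * m₁^(p/2)) ≤ (t/K)^((1:ℝ)/2) * ((ε*t)/K)^((1:ℝ)/2) :=
    mul_le_mul hu₀ hu₁ (by positivity) (Real.rpow_nonneg hTK.le _)
  have h2 : (t/K)^((1:ℝ)/2) * (t/K)^((1:ℝ)/2) = t/K := by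
    rw [← Real.rpow_add hTK]; norm_num
  have heq : (t/K)^((1:ℝ)/2) * ((ε*t)/K)^((1:ℝ)/2) = ε^((1:ℝ)/2) * (t/K) := by
    have h1 : (ε*t)/K = ε * (t/K) := by ring
    rw [h1, Real.mul_rpow hε.le hTK.le]
    calc (t/K)^((1:ℝ)/2) * (ε^((1:ℝ)/2) * (t/K)^((1:ℝ)/2))
        = ε^((1:ℝ)/2) * ((t/K)^((1:ℝ)/2) * (t/K)^((1:ℝ)/2)) := by ring
    _ = ε^((1:ℝ)/2) * (t/K) := by rw [h2]
  calc d₀ * m₀^p * d₁ ≤ c * ((d₀ * m₀^(p/2)) * (d₁ * m₁^(p/2))) := key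
  _ ≤ c * ((t/K)^((1:ℝ)/2) * ((ε*t)/K)^((1:ℝ)/2)) := mul_le_mul_of_nonneg_left hprod hc
  _ = c * (ε^((1:ℝ)/2) * (t/K)) := by rw [heq]

lemma cross_B2 {s d₀ d₁ m₀ m₁ ε t K : ℝ} (hs0 : 0 < s) (hs1 : s < 1)
    (hd₀ : 0 < d₀) (hd₁ : 0 < d₁) (hm₀ : 0 < m₀) (hm₁ : 0 < m₁)
    (hK : 0 < K) (ht : 0 < t) (hε : 0 < ε)
    (hp : 0 ≤ 1/s - 2)
    (hm₀d : m₀ ≤ 3/2 * d₀) (hd₀m : d₀ ≤ 2*m₀) (hd₁m : d₁ ≤ 2*m₁)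
    (hQ₀ : d₀^2 * m₀ ^ (1/s-2) ≤ t / K) (hQ₁ : d₁^2 * m₁ ^ (1/s-2) ≤ (ε*t) / K) :
    d₀ * m₀ ^ (1/s-2) * d₁ ≤ (3:ℝ)^(1/s-2) * (ε ^ s * (t / K)) := by
  have hTK : 0 < t / K := div_pos ht hK
  have hE : 0 < (ε*t)/K := div_pos (mul_pos hε ht) hK
  have h2p : 0 < (2:ℝ)^(1/s-2) := Real.rpow_pos_of_pos two_pos _
  have hA : 0 < (2:ℝ)^(1/s-2) * (t/K) := mul_pos h2p hTK
  have hAε : 0 < (2:ℝ)^(1/s-2) * ((ε*t)/K) := mul_pos h2p hE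
  -- step 1 : d₀^(1/s) ≤ 2^p * (t/K)
  have step : ∀ d m Y : ℝ, 0 < d → 0 < m → 0 < Y → d ≤ 2*m → d^2 * m^(1/s-2) ≤ Y →
      d ^ ((1:ℝ)/s) ≤ 2^(1/s-2) * Y := by
    intro d m Y hd hm hY hdm hQ
    have ha : (d/2) ^ (1/s-2) ≤ m ^ (1/s-2) :=
      Real.rpow_le_rpow (by positivity) (by linarith) hp
    have hb : d^2 * (d/2)^(1/s-2) ≤ Y :=
      le_trans (mul_le_mul_of_nonneg_left ha (by positivity)) hQ
    have hc : (d/2)^(1/s-2) = d^(1/s-2) / 2^(1/s-2) :=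
      Real.div_rpow hd.le (by norm_num : (0:ℝ) ≤ 2) _
    have hdd : d^2 * d^(1/s-2) = d^((1:ℝ)/s) := by
      rw [sq_mul_rpow hd]
      congr 1
      ring
    calc d^((1:ℝ)/s) = (d^2 * (d/2)^(1/s-2)) * 2^(1/s-2) := by
          rw [hc, ← hdd]; field_simp
    _ ≤ Y * 2^(1/s-2) := mul_le_mul_of_nonneg_right hb h2p.le
    _ = 2^(1/s-2) * Y := by ring
  have step1 := step d₀ m₀ (t/K) hd₀ hm₀ hTK hd₀m hQ₀
  have step2 := step d₁ m₁ ((ε*t)/K) hd₁ hm₁ hE hd₁m hQ₁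
  -- step 3 : d₀^(1/s-1) ≤ A^(1-s), with A := 2^p*(t/K)
  have hmulexp : (1:ℝ)/s * (1-s) = 1/s - 1 := by
    field_simp
  have step3 : d₀ ^ ((1:ℝ)/s - 1) ≤ ((2:ℝ)^(1/s-2) * (t/K)) ^ (1-s) := by
    have := Real.rpow_le_rpow (Real.rpow_nonneg hd₀.le _) step1 (by linarith : (0:ℝ) ≤ 1-s)
    rwa [← Real.rpow_mul hd₀.le, hmulexp] at this
  have hmulexp2 : (1:ℝ)/s * s = 1 := by
    field_simp
  have step4 : d₁ ≤ ((2:ℝ)^(1/s-2) * ((ε*t)/K)) ^ s := by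
    have := Real.rpow_le_rpow (Real.rpow_nonneg hd₁.le _) step2 hs0.le
    rwa [← Real.rpow_mul hd₁.le, hmulexp2, Real.rpow_one] at this
  -- core bound
  have hcore : d₀ * m₀ ^ (1/s-2) * d₁ ≤ (3/2:ℝ)^(1/s-2) * (d₀ ^ ((1:ℝ)/s - 1) * d₁) := by
    have h1 : m₀^(1/s-2) ≤ (3/2:ℝ)^(1/s-2) * d₀^(1/s-2) := by
      have := Real.rpow_le_rpow hm₀.le hm₀d hp
      rwa [Real.mul_rpow (by norm_num : (0:ℝ) ≤ 3/2) hd₀.le] at this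
    have h2 : d₀ * d₀^(1/s-2) = d₀ ^ ((1:ℝ)/s - 1) := by
      rw [mul_self_rpow hd₀]
      congr 1
      ring
    calc d₀ * m₀ ^ (1/s-2) * d₁ ≤ d₀ * ((3/2:ℝ)^(1/s-2) * d₀^(1/s-2)) * d₁ := by
          have hcc : 0 ≤ d₀ * d₁ := by positivity
          nlinarith [mul_le_mul_of_nonneg_left h1 hcc]
    _ = (3/2:ℝ)^(1/s-2) * ((d₀ * d₀^(1/s-2)) * d₁) := by ring
    _ = (3/2:ℝ)^(1/s-2) * (d₀ ^ ((1:ℝ)/s - 1) * d₁) := by rw [h2]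
  -- A-algebra
  have hABe : ((2:ℝ)^(1/s-2) * (t/K)) ^ (1-s) * ((2:ℝ)^(1/s-2) * ((ε*t)/K)) ^ s
      = (2:ℝ)^(1/s-2) * (t/K) * ε ^ s := by
    have h1 : (2:ℝ)^(1/s-2) * ((ε*t)/K) = ((2:ℝ)^(1/s-2) * (t/K)) * ε := by ring
    rw [h1, Real.mul_rpow hA.le hε.le, ← mul_assoc, ← Real.rpow_add hA]
    norm_num
  have hfinal : d₀ ^ ((1:ℝ)/s - 1) * d₁ ≤ (2:ℝ)^(1/s-2) * (t/K) * ε ^ s := by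
    rw [← hABe]
    exact mul_le_mul step3 step4 hd₁.le (Real.rpow_nonneg hA.le _)
  have h32 : (3/2:ℝ)^(1/s-2) * (2:ℝ)^(1/s-2) = (3:ℝ)^(1/s-2) := by
    rw [← Real.mul_rpow (by norm_num : (0:ℝ) ≤ 3/2) (by norm_num : (0:ℝ) ≤ 2)]
    norm_num
  calc d₀ * m₀ ^ (1/s-2) * d₁ ≤ (3/2:ℝ)^(1/s-2) * (d₀ ^ ((1:ℝ)/s - 1) * d₁) := hcore
  _ ≤ (3/2:ℝ)^(1/s-2) * ((2:ℝ)^(1/s-2) * (t/K) * ε ^ s) := by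
      apply mul_le_mul_of_nonneg_left hfinal
      positivity
  _ = ((3/2:ℝ)^(1/s-2) * (2:ℝ)^(1/s-2)) * (ε ^ s * (t/K)) := by ring
  _ = (3:ℝ)^(1/s-2) * (ε ^ s * (t/K)) := by rw [h32]

lemma cross_B4 {s d₀ d₁ m₀ m₁ ε t K : ℝ} (hs0 : 0 < s) (hs1 : s < 1)
    (hd₀ : 0 < d₀) (hd₁ : 0 < d₁) (hm₀ : 0 < m₀) (hm₁ : 0 < m₁)
    (hK : 0 < K) (ht : 0 < t) (hε : 0 < ε)
    (hp : 1/s - 2 < 0)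
    (hd₀m : d₀ ≤ 2*m₀) (hm₀d : m₀ ≤ d₁/2) (hm₁d : m₁ ≤ 3/2 * d₁)
    (hQ₁ : d₁^2 * m₁ ^ (1/s-2) ≤ (ε*t) / K) :
    d₀ * m₀ ^ (1/s-2) * d₁ ≤ (3:ℝ)^(2-1/s) * (ε * (t / K)) := by
  have hE : 0 < (ε*t)/K := div_pos (mul_pos hε ht) hK
  have hγ : (0:ℝ) < 1/s - 1 := by have := one_lt_inv_s hs0 hs1; linarith
  have h32p : 0 < (3/2:ℝ)^(1/s-2) := Real.rpow_pos_of_pos (by norm_num) _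
  -- d₁^(1/s) ≤ (ε*t/K) / (3/2)^(1/s-2)
  have hstep : d₁ ^ ((1:ℝ)/s) ≤ ((ε*t)/K) / (3/2:ℝ)^(1/s-2) := by
    have ha : ((3/2:ℝ) * d₁) ^ (1/s-2) ≤ m₁ ^ (1/s-2) := by
      apply Real.rpow_le_rpow_of_nonpos hm₁ (by linarith) hp.le
    have hb : d₁^2 * ((3/2:ℝ)*d₁)^(1/s-2) ≤ (ε*t)/K :=
      le_trans (mul_le_mul_of_nonneg_left ha (by positivity)) hQ₁
    have hc : ((3/2:ℝ)*d₁)^(1/s-2) = (3/2:ℝ)^(1/s-2) * d₁^(1/s-2) :=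
      Real.mul_rpow (by norm_num) hd₁.le
    have hdd : d₁^2 * d₁^(1/s-2) = d₁^((1:ℝ)/s) := by
      rw [sq_mul_rpow hd₁]
      congr 1
      ring
    rw [le_div_iff₀ h32p]
    calc d₁^((1:ℝ)/s) * (3/2:ℝ)^(1/s-2) = d₁^2 * ((3/2:ℝ)*d₁)^(1/s-2) := by
          rw [hc, ← hdd]; ring
    _ ≤ (ε*t)/K := hb
  -- core
  have hcore : d₀ * m₀ ^ (1/s-2) * d₁ ≤ 2 / (2:ℝ)^(1/s-1) * d₁ ^ ((1:ℝ)/s) := by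
    have h1 : m₀ * m₀^(1/s-2) = m₀ ^ ((1:ℝ)/s - 1) := by
      rw [mul_self_rpow hm₀]
      congr 1
      ring
    have h2 : m₀ ^ ((1:ℝ)/s - 1) ≤ (d₁/2) ^ ((1:ℝ)/s-1) :=
      Real.rpow_le_rpow hm₀.le hm₀d hγ.le
    have h3 : (d₁/2) ^ ((1:ℝ)/s-1) = d₁^((1:ℝ)/s-1) / 2^((1:ℝ)/s-1) :=
      Real.div_rpow hd₁.le (by norm_num : (0:ℝ) ≤ 2) _
    have h4 : d₁^((1:ℝ)/s-1) * d₁ = d₁ ^ ((1:ℝ)/s) := by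
      rw [mul_comm, mul_self_rpow hd₁]
      congr 1
      ring
    have hm₀p : 0 ≤ m₀^(1/s-2) := Real.rpow_nonneg hm₀.le _
    calc d₀ * m₀ ^ (1/s-2) * d₁ ≤ (2*m₀) * m₀ ^ (1/s-2) * d₁ := by
          apply mul_le_mul_of_nonneg_right _ hd₁.le
          exact mul_le_mul_of_nonneg_right hd₀m hm₀p
    _ = 2 * (m₀ * m₀^(1/s-2)) * d₁ := by ring
    _ = 2 * m₀ ^ ((1:ℝ)/s - 1) * d₁ := by rw [h1]
    _ ≤ 2 * (d₁/2) ^ ((1:ℝ)/s-1) * d₁ := by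
        apply mul_le_mul_of_nonneg_right _ hd₁.le
        linarith
    _ = 2 / 2^((1:ℝ)/s-1) * (d₁^((1:ℝ)/s-1) * d₁) := by rw [h3]; ring
    _ = 2 / (2:ℝ)^(1/s-1) * d₁ ^ ((1:ℝ)/s) := by rw [h4]
  have h2p : 0 < (2:ℝ)^((1:ℝ)/s-1) := Real.rpow_pos_of_pos two_pos _
  calc d₀ * m₀ ^ (1/s-2) * d₁ ≤ 2 / (2:ℝ)^(1/s-1) * d₁ ^ ((1:ℝ)/s) := hcore
  _ ≤ 2 / (2:ℝ)^(1/s-1) * (((ε*t)/K) / (3/2:ℝ)^(1/s-2)) := by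
      apply mul_le_mul_of_nonneg_left hstep
      positivity
  _ = (2 / (2:ℝ)^(1/s-1) * ((3/2:ℝ)^(1/s-2))⁻¹) * ((ε*t)/K) := by ring
  _ = (3:ℝ)^(2-1/s) * (ε * (t/K)) := by
      have e0 : (2:ℝ)^(2-1/s) * (2:ℝ)^(1/s-1) = 2 := by
        rw [← Real.rpow_add two_pos]
        have he : (2 - 1/s) + (1/s - 1) = (1:ℝ) := by ring
        rw [he, Real.rpow_one]
      have e1 : 2 / (2:ℝ)^(1/s-1) = (2:ℝ)^(2-1/s) := by
        rw [div_eq_iff h2p.ne']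
        exact e0.symm
      have e2 : ((3/2:ℝ)^(1/s-2))⁻¹ = (3/2:ℝ)^(2-1/s) := by
        rw [← Real.rpow_neg (by norm_num : (0:ℝ) ≤ 3/2)]
        congr 1
        ring
      have e3 : (2:ℝ)^(2-1/s) * (3/2:ℝ)^(2-1/s) = (3:ℝ)^(2-1/s) := by
        rw [← Real.mul_rpow (by norm_num : (0:ℝ) ≤ 2) (by norm_num : (0:ℝ) ≤ 3/2)]
        norm_num
      rw [e1, e2, e3]
      ring

end Branches

set_option maxHeartbeats 1000000 in
lemma sec_engulf {s : ℝ} (hs0 : 0 < s) (hs1 : s < 1) {z₀ z₁ z r₁ ε t : ℝ}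
    (hr₁ : 0 < r₁) (hr : r₁ ≤ 1) (ht : 0 < t) (hε0 : 0 < ε) (hε1 : ε ≤ 1)
    (h₀ : deltaH s z₀ z₁ < r₁ * t) (h₁ : deltaH s z₁ z < ε * t) :
    deltaH s z₀ z < r₁ * t + (1 + eCB s) * ε ^ (1 / max 2 (1/s)) * t := by
  have hsinv : 1 < 1/s := one_lt_inv_s hs0 hs1
  set q := max 2 (1/s) with hqdef
  have hq2 : (2:ℝ) ≤ q := le_max_left _ _
  have hqs : 1/s ≤ q := le_max_right _ _
  have hq0 : (0:ℝ) < q := by linarith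
  have hq1 : 1/q ≤ 1 := by rw [div_le_one hq0]; linarith
  have hqhalf : (1:ℝ)/q ≤ 1/2 := by
    apply one_div_le_one_div_of_le <;> norm_num
    exact hq2
  have hqs' : 1/q ≤ s := by
    have h := one_div_le_one_div_of_le (by linarith : (0:ℝ) < 1/s) hqs
    rwa [one_div_one_div] at h
  have hεt : 0 < ε ^ (1/q) * t := mul_pos (Real.rpow_pos_of_pos hε0 _) ht
  have hεq : ε ≤ ε ^ (1/q) := by
    nth_rewrite 1 [← Real.rpow_one ε]
    exact Real.rpow_le_rpow_of_exponent_ge hε0 hε1 hq1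
  have hεhalf : ε ^ ((1:ℝ)/2) ≤ ε ^ (1/q) :=
    Real.rpow_le_rpow_of_exponent_ge hε0 hε1 hqhalf
  have hεs : ε ^ s ≤ ε ^ (1/q) :=
    Real.rpow_le_rpow_of_exponent_ge hε0 hε1 hqs'
  have hCB := eCB_pos hs0 hs1
  have hid := deltaH_split s z₀ z z₁
  have hδ₁ : deltaH s z₁ z ≤ ε ^ (1/q) * t :=
    le_trans h₁.le (mul_le_mul_of_nonneg_right hεq ht.le)
  suffices hXb : (hder s z₁ - hder s z₀) * (z - z₁) ≤ eCB s * (ε ^ (1/q) * t) by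
    have hring : (1 + eCB s) * ε ^ (1/q) * t = ε^(1/q)*t + eCB s * (ε^(1/q)*t) := by ring
    rw [hid, hring]
    linarith
  by_cases hzz : z = z₁
  · rw [hzz, sub_self, mul_zero]
    exact mul_nonneg hCB.le hεt.le
  by_cases hzz' : z₁ = z₀
  · rw [hzz', sub_self, zero_mul]
    exact mul_nonneg hCB.le hεt.le
  -- main case
  have hKd := eKd_pos hs0 hs1
  have hCA := eCA_pos hs0 hs1
  set d₀ := |z₁ - z₀| with hd₀def
  set d₁ := |z - z₁| with hd₁def
  set m₀ := max |z₀| |z₁| with hm₀def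
  set m₁ := max |z₁| |z| with hm₁def
  have hd₀ : 0 < d₀ := abs_pos.2 (sub_ne_zero.2 hzz')
  have hd₁ : 0 < d₁ := abs_pos.2 (sub_ne_zero.2 hzz)
  have hz₀m : |z₀| ≤ m₀ := le_max_left _ _
  have hz₁m : |z₁| ≤ m₀ := le_max_right _ _
  have hz₁m' : |z₁| ≤ m₁ := le_max_left _ _
  have hzm : |z| ≤ m₁ := le_max_right _ _
  have hd₀m : d₀ ≤ 2 * m₀ := by
    have h := abs_add_le z₁ (-z₀)
    rw [abs_neg, ← sub_eq_add_neg] at h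
    rw [hd₀def]
    linarith
  have hd₁m : d₁ ≤ 2 * m₁ := by
    have h := abs_add_le z (-z₁)
    rw [abs_neg, ← sub_eq_add_neg] at h
    rw [hd₁def]
    linarith
  have hm₀ : 0 < m₀ := by linarith
  have hm₁ : 0 < m₁ := by linarith
  have hrt : deltaH s z₀ z₁ ≤ t := by nlinarith
  have hQ₀ : d₀^2 * m₀ ^ (1/s-2) ≤ t / eKd s := by
    rw [le_div_iff₀ hKd]
    have h := deltaH_ge hs0 hs1 z₀ z₁
    rw [← sq_abs (z₁ - z₀)] at h
    calc d₀^2 * m₀^(1/s-2) * eKd s = eKd s * |z₁-z₀|^2 * (max |z₀| |z₁|)^(1/s-2) := by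
          rw [hd₀def, hm₀def]; ring
    _ ≤ deltaH s z₀ z₁ := h
    _ ≤ t := hrt
  have hQ₁ : d₁^2 * m₁ ^ (1/s-2) ≤ (ε*t) / eKd s := by
    rw [le_div_iff₀ hKd]
    have h := deltaH_ge hs0 hs1 z₁ z
    rw [← sq_abs (z - z₁)] at h
    calc d₁^2 * m₁^(1/s-2) * eKd s = eKd s * |z - z₁|^2 * (max |z₁| |z|)^(1/s-2) := by
          rw [hd₁def, hm₁def]; ring
    _ ≤ deltaH s z₁ z := h
    _ ≤ ε * t := h₁.le
  have hX : (hder s z₁ - hder s z₀) * (z - z₁) ≤ eCA s * (d₀ * m₀ ^ (1/s-2) * d₁) := by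
    have h1 := hder_diff_le hs0 hs1 z₀ z₁
    calc (hder s z₁ - hder s z₀) * (z - z₁)
        ≤ |(hder s z₁ - hder s z₀) * (z - z₁)| := le_abs_self _
    _ = |hder s z₁ - hder s z₀| * d₁ := by rw [abs_mul, hd₁def]
    _ ≤ (s/(1-s) * (1/s-1+4) * d₀ * m₀^(1/s-2)) * d₁ := by
        apply mul_le_mul_of_nonneg_right _ (abs_nonneg _)
        exact h1
    _ = eCA s * (d₀ * m₀^(1/s-2) * d₁) := by rw [eCA]; ring
  -- sum of the four 3-powers
  have h3a : (0:ℝ) < (3:ℝ) ^ ((1/s-2)/2) := Real.rpow_pos_of_pos (by norm_num) _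
  have h3b : (0:ℝ) < (3:ℝ) ^ ((2-1/s)/2) := Real.rpow_pos_of_pos (by norm_num) _
  have h3c : (0:ℝ) < (3:ℝ) ^ (1/s-2) := Real.rpow_pos_of_pos (by norm_num) _
  have h3d : (0:ℝ) < (3:ℝ) ^ (2-1/s) := Real.rpow_pos_of_pos (by norm_num) _
  have hTK : 0 < t / eKd s := div_pos ht hKd
  -- branch bound: core ≤ (sum) * (ε^(1/q) * (t/eKd s))
  have hbr : d₀ * m₀ ^ (1/s-2) * d₁ ≤
      ((3:ℝ)^((1/s-2)/2) + (3:ℝ)^((2-1/s)/2) + (3:ℝ)^(1/s-2) + (3:ℝ)^(2-1/s))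
        * (ε ^ (1/q) * (t / eKd s)) := by
    have hmono : ∀ c : ℝ, 0 < c →
        c ≤ (3:ℝ)^((1/s-2)/2) + (3:ℝ)^((2-1/s)/2) + (3:ℝ)^(1/s-2) + (3:ℝ)^(2-1/s) →
        ∀ e : ℝ, 0 ≤ e → e ≤ ε ^ (1/q) →
        d₀ * m₀ ^ (1/s-2) * d₁ ≤ c * (e * (t / eKd s)) →
        d₀ * m₀ ^ (1/s-2) * d₁ ≤
          ((3:ℝ)^((1/s-2)/2) + (3:ℝ)^((2-1/s)/2) + (3:ℝ)^(1/s-2) + (3:ℝ)^(2-1/s))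
            * (ε ^ (1/q) * (t / eKd s)) := by
      intro c hc hcs e he hee hbd
      calc d₀ * m₀ ^ (1/s-2) * d₁ ≤ c * (e * (t / eKd s)) := hbd
      _ ≤ c * (ε ^ (1/q) * (t / eKd s)) := by
          apply mul_le_mul_of_nonneg_left _ hc.le
          exact mul_le_mul_of_nonneg_right hee hTK.le
      _ ≤ _ := by
          apply mul_le_mul_of_nonneg_right hcs
          exact mul_nonneg (Real.rpow_nonneg hε0.le _) hTK.le
    rcases le_or_gt 0 (1/s - 2) with hp | hp
    · rcases le_or_gt m₀ (3*m₁) with hcmp | hcmp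
      · -- B1
        apply hmono _ h3a (by linarith) _ (Real.rpow_nonneg hε0.le _) hεhalf
        apply cross_sqrt_bound hd₀ hd₁ hm₀ hm₁ h3a.le hKd ht hε0 _ hQ₀ hQ₁
        have := Real.rpow_le_rpow hm₀.le hcmp (by linarith : (0:ℝ) ≤ (1/s-2)/2)
        rwa [Real.mul_rpow (by norm_num : (0:ℝ) ≤ 3) hm₁.le] at this
      · -- B2 : m₀ > 3 m₁, need m₀ ≤ 3/2 d₀
        have hz₁small : |z₁| < m₀/3 := by
          have := hz₁m'
          linarith
        have hm₀z : m₀ = |z₀| := by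
          rcases max_cases |z₀| |z₁| with ⟨h1, _⟩ | ⟨h1, _⟩
          · rw [hm₀def, h1]
          · exfalso
            have hx : m₀ = |z₁| := by rw [hm₀def, h1]
            rw [hx] at hz₁small hm₀
            linarith
        have hd₀big : m₀ - m₀/3 ≤ d₀ := by
          have h := abs_sub_abs_le_abs_sub z₀ z₁
          have he : |z₀ - z₁| = d₀ := by rw [hd₀def, abs_sub_comm]
          rw [he] at h
          rw [hm₀z]
          have := hz₁small
          rw [hm₀z] at this
          linarith [hz₁small]
        have hm₀d : m₀ ≤ 3/2 * d₀ := by linarith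
        apply hmono _ h3c (by linarith) _ (Real.rpow_nonneg hε0.le _) hεs
        exact cross_B2 hs0 hs1 hd₀ hd₁ hm₀ hm₁ hKd ht hε0 hp hm₀d hd₀m hd₁m hQ₀ hQ₁
    · rcases le_or_gt m₁ (3*m₀) with hcmp | hcmp
      · -- B3
        apply hmono _ h3b (by linarith) _ (Real.rpow_nonneg hε0.le _) hεhalf
        apply cross_sqrt_bound hd₀ hd₁ hm₀ hm₁ h3b.le hKd ht hε0 _ hQ₀ hQ₁
        have h1 : m₁/3 ≤ m₀ := by linarith
        have h2 := Real.rpow_le_rpow_of_nonpos (by positivity : 0 < m₁/3) h1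
          (by linarith : (1/s-2)/2 ≤ 0)
        have h3 : (m₁/3) ^ ((1/s-2)/2) = (3:ℝ)^((2-1/s)/2) * m₁ ^ ((1/s-2)/2) := by
          rw [Real.div_rpow hm₁.le (by norm_num : (0:ℝ) ≤ 3) _]
          rw [div_eq_mul_inv, ← Real.rpow_neg (by norm_num : (0:ℝ) ≤ 3)]
          have he : -((1/s-2)/2) = (2-1/s)/2 := by ring
          rw [he]
          ring
        rw [h3] at h2
        exact h2
      · -- B4 : m₁ > 3 m₀
        have hz₁small : |z₁| < m₁/3 := by linarith
        have hm₁z : m₁ = |z| := by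
          rcases max_cases |z₁| |z| with ⟨h1, _⟩ | ⟨h1, _⟩
          · exfalso
            have hx : m₁ = |z₁| := by rw [hm₁def, h1]
            rw [hx] at hz₁small hm₁
            linarith
          · rw [hm₁def, h1]
        have hd₁big : m₁ - m₁/3 ≤ d₁ := by
          have h := abs_sub_abs_le_abs_sub z z₁
          rw [← hd₁def] at h
          rw [hm₁z]
          have h2 := hz₁small
          rw [hm₁z] at h2
          linarith
        have hm₁d : m₁ ≤ 3/2 * d₁ := by linarith
        have hm₀d : m₀ ≤ d₁/2 := by
          have h1 : m₀ < m₁/3 := by linarith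
          linarith
        apply hmono _ h3d (by linarith) _ hε0.le hεq
        exact cross_B4 hs0 hs1 hd₀ hd₁ hm₀ hm₁ hKd ht hε0 hp hd₀m hm₀d hm₁d hQ₁
  -- conclude
  calc (hder s z₁ - hder s z₀) * (z - z₁)
      ≤ eCA s * (d₀ * m₀ ^ (1/s-2) * d₁) := hX
  _ ≤ eCA s * (((3:ℝ)^((1/s-2)/2) + (3:ℝ)^((2-1/s)/2) + (3:ℝ)^(1/s-2) + (3:ℝ)^(2-1/s))
        * (ε ^ (1/q) * (t / eKd s))) := mul_le_mul_of_nonneg_left hbr hCA.le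
  _ = eCB s * (ε ^ (1/q) * t) := by
      rw [eCB]
      field_simp


/-- **Lemma 3.4: engulfing property of Monge–Ampère cubes and one-dimensional sections.** -/
theorem engulfing (n : ℕ) (hn : 1 ≤ n) (s : ℝ) (hs0 : 0 < s) (hs1 : s < 1) :
    (∃ C₀ p₀ : ℝ, 0 < C₀ ∧ 1 ≤ p₀ ∧
      ∀ x₀ : Euc n, ∀ r₁ r₂ t : ℝ, 0 < r₁ → r₁ < r₂ → r₂ ≤ 1 → 0 < t →
        ∀ x₁ ∈ cubeX (r₁ * t) x₀,
          cubeX (C₀ * (r₂ - r₁) ^ p₀ * t) x₁ ⊆ cubeX (r₂ * t) x₀) ∧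
    (∃ C₁ p₁ : ℝ, 0 < C₁ ∧ 1 ≤ p₁ ∧
      ∀ z₀ : ℝ, ∀ r₁ r₂ t : ℝ, 0 < r₁ → r₁ < r₂ → r₂ ≤ 1 → 0 < t →
        ∀ z₁ ∈ secH s (r₁ * t) z₀,
          secH s (C₁ * (r₂ - r₁) ^ p₁ * t) z₁ ⊆ secH s (r₂ * t) z₀) := by
  constructor
  · -- cubes
    refine ⟨1/4, 2, by norm_num, by norm_num, ?_⟩
    intro x₀ r₁ r₂ t hr₁ hr12 hr2 ht x₁ hx₁ x hx i
    have h1 : |x₁ i - x₀ i| < Real.sqrt (2 * (r₁ * t)) := hx₁ i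
    have h2 : |x i - x₁ i| < Real.sqrt (2 * (1/4 * (r₂ - r₁) ^ (2:ℝ) * t)) := hx i
    have hD : 0 < r₂ - r₁ := by linarith
    have h2t : (0:ℝ) ≤ 2 * t := by linarith
    have e1 : Real.sqrt (2 * (r₁ * t)) = Real.sqrt r₁ * Real.sqrt (2*t) := by
      rw [show 2 * (r₁ * t) = r₁ * (2*t) by ring, Real.sqrt_mul hr₁.le]
    have e2 : Real.sqrt (2 * (r₂ * t)) = Real.sqrt r₂ * Real.sqrt (2*t) := by
      rw [show 2 * (r₂ * t) = r₂ * (2*t) by ring, Real.sqrt_mul (by linarith : (0:ℝ) ≤ r₂)]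
    have e3 : Real.sqrt (2 * (1/4 * (r₂ - r₁) ^ (2:ℝ) * t))
        = ((r₂ - r₁)/2) * Real.sqrt (2*t) := by
      rw [rpow_two']
      rw [show 2 * (1/4 * (r₂ - r₁) ^ 2 * t) = ((r₂-r₁)/2)^2 * (2*t) by ring]
      rw [Real.sqrt_mul (sq_nonneg _), Real.sqrt_sq (by linarith : (0:ℝ) ≤ (r₂-r₁)/2)]
    have ha : Real.sqrt r₁ ^ 2 = r₁ := Real.sq_sqrt hr₁.le
    have hb : Real.sqrt r₂ ^ 2 = r₂ := Real.sq_sqrt (by linarith : (0:ℝ) ≤ r₂)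
    have hb1 : Real.sqrt r₂ ≤ 1 := by
      rw [show (1:ℝ) = Real.sqrt 1 by rw [Real.sqrt_one]]
      exact Real.sqrt_le_sqrt (by linarith)
    have ha0 : 0 ≤ Real.sqrt r₁ := Real.sqrt_nonneg _
    have hab : Real.sqrt r₁ ≤ Real.sqrt r₂ := Real.sqrt_le_sqrt (by linarith)
    have hkey : Real.sqrt r₁ + (r₂ - r₁)/2 ≤ Real.sqrt r₂ := by nlinarith
    have hst : 0 ≤ Real.sqrt (2*t) := Real.sqrt_nonneg _
    calc |x i - x₀ i| ≤ |x i - x₁ i| + |x₁ i - x₀ i| := abs_sub_le _ _ _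
    _ < ((r₂ - r₁)/2) * Real.sqrt (2*t) + Real.sqrt r₁ * Real.sqrt (2*t) := by
        rw [e3] at h2
        rw [e1] at h1
        linarith
    _ ≤ Real.sqrt r₂ * Real.sqrt (2*t) := by nlinarith
    _ = Real.sqrt (2 * (r₂ * t)) := e2.symm
  · -- sections
    have hCB := eCB_pos hs0 hs1
    have hsinv : 1 < 1/s := one_lt_inv_s hs0 hs1
    set q := max 2 (1/s) with hqdef
    have hq2 : (2:ℝ) ≤ q := le_max_left _ _
    have hq0 : (0:ℝ) < q := by linarith
    have hinv : (0:ℝ) < (1 + eCB s)⁻¹ := by positivity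
    have hinv1 : (1 + eCB s)⁻¹ ≤ 1 := by
      rw [inv_le_one_iff₀]
      right
      linarith
    refine ⟨((1 + eCB s)⁻¹) ^ q, q, Real.rpow_pos_of_pos hinv _, by linarith, ?_⟩
    intro z₀ r₁ r₂ t hr₁ hr12 hr2 ht z₁ hz₁ z hz
    have hD : 0 < r₂ - r₁ := by linarith
    have hD1 : r₂ - r₁ ≤ 1 := by linarith
    set ε := ((1 + eCB s)⁻¹) ^ q * (r₂ - r₁) ^ q with hεdef
    have hε0 : 0 < ε := mul_pos (Real.rpow_pos_of_pos hinv _) (Real.rpow_pos_of_pos hD _)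
    have hε1 : ε ≤ 1 := by
      have h1 : ((1 + eCB s)⁻¹) ^ q ≤ 1 := Real.rpow_le_one hinv.le hinv1 hq0.le
      have h2 : (r₂ - r₁) ^ q ≤ 1 := Real.rpow_le_one hD.le hD1 hq0.le
      have h3 : 0 ≤ (r₂ - r₁) ^ q := Real.rpow_nonneg hD.le _
      nlinarith
    have hz' : deltaH s z₁ z < ε * t := by
      have : ((1 + eCB s)⁻¹) ^ q * (r₂ - r₁) ^ q * t = ε * t := by rw [hεdef]
      rw [← this]
      exact hz
    have hz₁' : deltaH s z₀ z₁ < r₁ * t := hz₁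
    have hmain := sec_engulf hs0 hs1 hr₁ (by linarith) ht hε0 hε1 hz₁' hz'
    have hεq : ε ^ (1/q) = (1 + eCB s)⁻¹ * (r₂ - r₁) := by
      rw [hεdef, Real.mul_rpow (Real.rpow_nonneg hinv.le _) (Real.rpow_nonneg hD.le _)]
      rw [← Real.rpow_mul hinv.le, ← Real.rpow_mul hD.le,
        mul_one_div_cancel hq0.ne', Real.rpow_one, Real.rpow_one]
    have hfin : (1 + eCB s) * ε ^ (1/q) = r₂ - r₁ := by
      rw [hεq, ← mul_assoc, mul_inv_cancel₀ (by linarith : (1 + eCB s) ≠ 0), one_mul]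
    show deltaH s z₀ z < r₂ * t
    have h1 : r₁ * t + (1 + eCB s) * ε ^ (1/q) * t = r₂ * t := by
      rw [hfin]; ring
    rw [← h1]
    exact hmain
end
end
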